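/- arXiv:0903.4766 — 6 statements merged into one kernel-verified Lean document; each statement's English description precedes it below -/
import Mathlib

section
/- Let K be a primitive quartic CM field with maximal real subfield K₀. Then every unit of the ring of integers of K is the product of a root of unity in K and a unit of the ring of integers of K₀ (i.e. O_K^× = μ_K · O_{K₀}^×), and the group μ_K of roots of unity of K has order 2 or 10. -/
open NumberField Module Polynomial

theorem quad_normal (F E : Type*) [Field F] [Field E] [Algebra F E]
    (h : Module.finrank F E = 2) : Normal F E := by
  have hfd : FiniteDimensional F E := Module.finite_of_finrank_pos (by omega)
  rw [normal_iff]
  intro x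
  have hx : IsIntegral F x := IsIntegral.of_finite F x
  refine ⟨hx, ?_⟩
  set P := (minpoly F x).map (algebraMap F E) with hP
  have hPdeg : P.natDegree ∣ 2 := by
    rw [hP, natDegree_map]
    exact h ▸ minpoly.degree_dvd hx
  have hroot : P.IsRoot x := by
    rw [hP, IsRoot, eval_map, ← aeval_def, minpoly.aeval]
  rcases (dvd_iff_isRoot).2 hroot with ⟨q, hq⟩
  have hPne : P ≠ 0 := by
    rw [hP]
    exact (Polynomial.map_ne_zero_iff (algebraMap F E).injective).2
      (minpoly.ne_zero hx)
  have hqne : q ≠ 0 := fun h0 => hPne (by rw [hq, h0, mul_zero])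
  have : q.natDegree ≤ 1 := by
    have := natDegree_mul (p := X - C x) (q := q) (by exact X_sub_C_ne_zero x) hqne
    rw [← hq, natDegree_X_sub_C] at this
    have h2 : P.natDegree ≤ 2 := Nat.le_of_dvd two_pos hPdeg
    omega
  rw [hq]
  exact Splits.mul (Splits.X_sub_C _) (Splits.of_natDegree_le_one this)

theorem quad_aut (F E : Type*) [Field F] [Field E] [Algebra F E] [CharZero F]
    (h : Module.finrank F E = 2) :
    ∃ σ : E ≃ₐ[F] E, (∃ x, σ x ≠ x) ∧ (∀ x, σ (σ x) = x) ∧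
      (∀ x : E, σ x = x → x ∈ Set.range (algebraMap F E)) := by
  have hfd : FiniteDimensional F E := Module.finite_of_finrank_pos (by omega)
  have hnorm : Normal F E := quad_normal F E h
  have hgal : IsGalois F E := ⟨⟩
  have hcard : Fintype.card (E ≃ₐ[F] E) = 2 := by
    rw [← Nat.card_eq_fintype_card, IsGalois.card_aut_eq_finrank, h]
  obtain ⟨σ, hσ⟩ := Fintype.exists_ne_of_one_lt_card (by omega) (1 : E ≃ₐ[F] E)
  have hall : ∀ τ : E ≃ₐ[F] E, τ = 1 ∨ τ = σ := by
    intro τ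
    by_contra hc
    push_neg at hc
    letI := Classical.decEq (E ≃ₐ[F] E)
    have : ({1, σ, τ} : Finset (E ≃ₐ[F] E)).card ≤ 2 := hcard ▸ Finset.card_le_univ _
    rw [Finset.card_insert_of_notMem (by simp only [Finset.mem_insert, Finset.mem_singleton]; push_neg; exact ⟨Ne.symm hσ, Ne.symm hc.1⟩),
      Finset.card_insert_of_notMem (by simp only [Finset.mem_singleton]; exact fun hh => hc.2 hh.symm), Finset.card_singleton] at this
    omega
  have hsq : σ * σ = 1 := by
    have := pow_card_eq_one (x := σ)
    rwa [hcard, pow_two] at this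
  refine ⟨σ, ?_, ?_, ?_⟩
  · by_contra hc
    push_neg at hc
    exact hσ (AlgEquiv.ext hc)
  · intro x
    have : (σ * σ) x = (1 : E ≃ₐ[F] E) x := by rw [hsq]
    simpa using this
  · intro x hfix
    have hmem : x ∈ IntermediateField.fixedField (⊤ : Subgroup (E ≃ₐ[F] E)) := by
      intro g
      rcases hall g.1 with h1 | h1 <;>
        · show g.1 • x = x
          rw [h1, AlgEquiv.smul_def]
          first
          | rfl
          | exact hfix
    have hbot : IntermediateField.fixedField
        (IntermediateField.fixingSubgroup (⊥ : IntermediateField F E)) = ⊥ :=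
      IsGalois.fixedField_fixingSubgroup ⊥
    have htop : IntermediateField.fixingSubgroup (⊥ : IntermediateField F E) = ⊤ := by
      ext g
      simp only [Subgroup.mem_top, iff_true]
      rw [IntermediateField.mem_fixingSubgroup_iff]
      intro y hy
      rw [IntermediateField.mem_bot] at hy
      obtain ⟨r, rfl⟩ := hy
      simpa using g.commutes r
    rw [htop] at hbot
    rw [← IntermediateField.mem_bot (F := F), ← hbot]
    exact hmem



theorem finrank_toSubfield_eq (K : Type*) [Field K] [CharZero K]
    (E : IntermediateField ℚ K) :
    Module.finrank ℚ ↥E.toSubfield = Module.finrank ℚ ↥E := by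
  refine (LinearEquiv.finrank_eq ?_).symm
  refine
    { toFun := fun x => ⟨x.1, (E.mem_toSubfield x.1).2 x.2⟩
      invFun := fun x => ⟨x.1, (E.mem_toSubfield x.1).1 x.2⟩
      left_inv := fun x => rfl
      right_inv := fun x => rfl
      map_add' := fun x y => rfl
      map_smul' := fun q x => ?_ }
  apply Subtype.ext
  show ((q • x : ↥E) : K) = ((q • (⟨x.1, _⟩ : E.toSubfield)) : K)
  rw [Rat.smul_def, Rat.smul_def]
  push_cast
  rfl

theorem no_imag_sqrt {K : Type*} [Field K] [NumberField K]
    (hprim : ∀ F : Subfield K, Module.finrank ℚ F = 2 →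
      ∃ φ : F →+* ℂ, ∀ x : F, (φ x).im = 0)
    (q : ℚ) (hq : 0 < q) (t : K) (ht : t ^ 2 = -(q : K)) : False := by
  have hmapq : ∀ r : ℚ, algebraMap ℚ K r = (r : K) := fun r => eq_ratCast _ r
  set f : ℚ[X] := X ^ 2 + C q with hf
  have hfmonic : f.Monic := by
    apply Polynomial.monic_X_pow_add_C q (by norm_num)
  have hfdeg : f.natDegree = 2 := by
    rw [hf]
    compute_degree!
  have haev : Polynomial.aeval t f = 0 := by
    rw [hf]
    simp [hmapq q, ht]
  have hint : IsIntegral ℚ t := ⟨f, hfmonic, haev⟩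
  have htnot : t ∉ Set.range (algebraMap ℚ K) := by
    rintro ⟨c, rfl⟩
    have : ((c ^ 2 : ℚ) : K) = ((-q : ℚ) : K) := by
      push_cast
      rw [← hmapq c, ht]
    have hcq : c ^ 2 = -q := Rat.cast_injective this
    nlinarith
  have hdeg2 : (minpoly ℚ t).natDegree = 2 := by
    have hdvd : minpoly ℚ t ∣ f := minpoly.dvd ℚ t haev
    have hle : (minpoly ℚ t).natDegree ≤ 2 :=
      hfdeg ▸ Polynomial.natDegree_le_of_dvd hdvd hfmonic.ne_zero
    have hpos : 0 < (minpoly ℚ t).natDegree := minpoly.natDegree_pos hint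
    rcases Nat.lt_or_ge (minpoly ℚ t).natDegree 2 with hlt | hge
    · exfalso
      have h1 : (minpoly ℚ t).natDegree = 1 := by omega
      have := Polynomial.eq_X_add_C_of_natDegree_le_one (le_of_eq h1)
      have hc1 : (minpoly ℚ t).coeff 1 = 1 := by
        have := (minpoly.monic hint).leadingCoeff
        rwa [Polynomial.leadingCoeff, h1] at this
      rw [hc1, map_one, one_mul] at this
      have haev2 := minpoly.aeval ℚ t
      rw [this] at haev2
      simp only [map_add, aeval_X, aeval_C] at haev2
      exact htnot ⟨-((minpoly ℚ t).coeff 0),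
        by rw [map_neg]; exact (eq_neg_of_add_eq_zero_left haev2).symm⟩
    · omega
  have hfr : Module.finrank ℚ ↥(IntermediateField.adjoin ℚ {t}).toSubfield = 2 := by
    rw [finrank_toSubfield_eq, ← hdeg2]
    exact IntermediateField.adjoin.finrank hint
  obtain ⟨φ, hφ⟩ := hprim _ hfr
  have htmem : t ∈ (IntermediateField.adjoin ℚ {t}).toSubfield :=
    ((IntermediateField.adjoin ℚ {t}).mem_toSubfield t).2
      (IntermediateField.mem_adjoin_simple_self ℚ t)
  set T : ↥(IntermediateField.adjoin ℚ {t}).toSubfield := ⟨t, htmem⟩ with hT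
  have hT2 : T ^ 2 = ((-q : ℚ) : ↥(IntermediateField.adjoin ℚ {t}).toSubfield) := by
    apply Subtype.ext
    show t ^ 2 = _
    rw [SubfieldClass.coe_ratCast]
    push_cast
    exact ht
  have ha2 : (φ T) ^ 2 = -(q : ℂ) := by
    rw [← map_pow, hT2, map_ratCast]
    push_cast
    ring
  have him := hφ T
  have hre := congrArg Complex.re ha2
  rw [pow_two, Complex.mul_re, him] at hre
  simp only [Complex.neg_re, Complex.ratCast_re] at hre
  have hqR : (0:ℝ) < (q:ℝ) := by exact_mod_cast hq
  nlinarith [hre]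


theorem tors_pow_ten {K : Type*} [Field K] [NumberField K]
    (hdegK : Module.finrank ℚ K = 4)
    (hprim : ∀ F : Subfield K, Module.finrank ℚ F = 2 →
      ∃ φ : F →+* ℂ, ∀ x : F, (φ x).im = 0)
    (x : K) (n : ℕ) (hn : 0 < n) (hx : x ^ n = 1) : x ^ 10 = 1 := by
  have hfin : IsOfFinOrder x := isOfFinOrder_iff_pow_eq_one.2 ⟨n, hn, hx⟩
  set d := orderOf x with hd
  have hdpos : 0 < d := hfin.orderOf_pos
  have hproot : IsPrimitiveRoot x d := IsPrimitiveRoot.orderOf x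
  have hint : IsIntegral ℚ x := by
    have : FiniteDimensional ℚ K := Module.finite_of_finrank_pos (by omega)
    exact IsIntegral.of_finite ℚ x
  have htot : Nat.totient d ∣ 4 := by
    have h1 : Polynomial.cyclotomic d ℚ = minpoly ℚ x :=
      Polynomial.cyclotomic_eq_minpoly_rat hproot hdpos
    have h2 := minpoly.degree_dvd hint
    rw [← h1, Polynomial.natDegree_cyclotomic, hdegK] at h2
    exact h2
  -- no primitive 4th root of unity in K
  have no4 : ¬ (4 ∣ d) := by
    rintro ⟨c, hc⟩
    have hy : IsPrimitiveRoot (x ^ c) 4 := hproot.pow hdpos (hc.trans (Nat.mul_comm _ _))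
    have hy4 : (x ^ c) ^ 4 = 1 := hy.pow_eq_one
    have hy2 : (x ^ c) ^ 2 ≠ 1 := hy.pow_ne_one_of_pos_of_lt (by norm_num) (by norm_num)
    have : ((x ^ c) ^ 2) * ((x ^ c) ^ 2) = 1 := by rw [← pow_add]; exact hy4
    rcases mul_self_eq_one_iff.1 this with h1 | h1
    · exact hy2 h1
    · refine no_imag_sqrt hprim 1 one_pos (x ^ c) ?_
      rw [h1]; norm_num
  -- no primitive 3rd root of unity in K
  have no3 : ¬ (3 ∣ d) := by
    rintro ⟨c, hc⟩
    have hz : IsPrimitiveRoot (x ^ c) 3 := hproot.pow hdpos (hc.trans (Nat.mul_comm _ _))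
    set z := x ^ c with hzdef
    have hz3 : z ^ 3 = 1 := hz.pow_eq_one
    have hz1 : z ≠ 1 := hz.ne_one (by norm_num)
    have hsum : z ^ 2 + z + 1 = 0 := by
      have hfac : (z - 1) * (z ^ 2 + z + 1) = 0 := by
        have : z ^ 3 - 1 = 0 := by rw [hz3]; ring
        linear_combination this
      rcases mul_eq_zero.1 hfac with h | h
      · exact absurd (by linear_combination h) hz1
      · exact h
    refine no_imag_sqrt hprim 3 (by norm_num) (2 * z + 1) ?_
    push_cast
    linear_combination 4 * hsum
  -- conclude d ∣ 10
  have hd10 : d ∣ 10 := by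
    rw [← Nat.factorization_le_iff_dvd (by omega) (by norm_num)]
    intro p
    by_cases hp : p.Prime
    · have key : p ∣ d → p - 1 ∣ 4 := by
        intro hpd
        have := Nat.totient_dvd_of_dvd hpd
        rw [Nat.totient_prime hp] at this
        exact this.trans htot
      have hp2 : 2 ≤ p := hp.two_le
      rcases Nat.lt_or_ge p 6 with h6 | h6
      · interval_cases p
        · -- p = 2
          have h2 : d.factorization 2 ≤ 1 := by
            by_contra hcon
            push_neg at hcon
            exact no4 (by
              have : (2:ℕ) ^ 2 ∣ d :=
                (Nat.Prime.pow_dvd_iff_le_factorization Nat.prime_two (by omega)).2 hcon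
              simpa using this)
          have h10 : 1 ≤ (10:ℕ).factorization 2 :=
            (Nat.Prime.pow_dvd_iff_le_factorization Nat.prime_two (by norm_num)).1 (by norm_num)
          omega
        · -- p = 3
          have h3 : d.factorization 3 = 0 := by
            by_contra hcon
            exact no3 (Nat.dvd_of_factorization_pos hcon)
          simp [h3]
        · exact absurd hp (by norm_num)
        · -- p = 5
          have h5 : d.factorization 5 ≤ 1 := by
            by_contra hcon
            push_neg at hcon
            have h25 : (5:ℕ) ^ 2 ∣ d :=
              (Nat.Prime.pow_dvd_iff_le_factorization Nat.prime_five (by omega)).2 hcon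
            have := Nat.totient_dvd_of_dvd h25
            have h20 : Nat.totient 25 = 20 := by decide
            rw [show (5:ℕ)^2 = 25 by norm_num, h20] at this
            have := this.trans htot
            omega
          have h10 : 1 ≤ (10:ℕ).factorization 5 :=
            (Nat.Prime.pow_dvd_iff_le_factorization Nat.prime_five (by norm_num)).1 (by norm_num)
          omega
      · -- p ≥ 6 prime: cannot divide d
        have hz : d.factorization p = 0 := by
          by_contra hcon
          have hpd : p ∣ d := Nat.dvd_of_factorization_pos hcon
          have := key hpd
          have hle : p - 1 ≤ 4 := Nat.le_of_dvd (by norm_num) this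
          omega
        simp [hz]
    · simp [Nat.factorization_eq_zero_of_not_prime _ hp]
  exact (orderOf_dvd_iff_pow_eq_one.1 hd10)



theorem count_tors {K : Type*} [Field K] [NumberField K]
    (h10 : ∀ x : K, (∃ n : ℕ, 0 < n ∧ x ^ n = 1) → x ^ 10 = 1) :
    Nat.card {x : K // ∃ n : ℕ, 0 < n ∧ x ^ n = 1} = 2 ∨
    Nat.card {x : K // ∃ n : ℕ, 0 < n ∧ x ^ n = 1} = 10 := by
  have e : {x : K // ∃ n : ℕ, 0 < n ∧ x ^ n = 1} ≃ rootsOfUnity 10 K :=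
    { toFun := fun x => rootsOfUnity.mkOfPowEq x.1 (h10 x.1 x.2)
      invFun := fun u => ⟨(u.1 : K), 10, by norm_num,
        by rw [← Units.val_pow_eq_pow_val, (mem_rootsOfUnity 10 u.1).1 u.2, Units.val_one]⟩
      left_inv := fun x => by
        apply Subtype.ext
        rfl
      right_inv := fun u => by
        apply Subtype.ext
        apply Units.ext
        rfl }
  rw [Nat.card_congr e]
  obtain ⟨g, hg⟩ := IsCyclic.exists_generator (α := rootsOfUnity 10 K)
  have hcard_ord : Nat.card (rootsOfUnity 10 K) = orderOf g :=
    (orderOf_eq_card_of_forall_mem_zpowers hg).symm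
  have hdvd : Nat.card (rootsOfUnity 10 K) ∣ 10 := by
    rw [hcard_ord]
    apply orderOf_dvd_iff_pow_eq_one.2
    apply Subtype.ext
    rw [Subgroup.coe_pow]
    exact (mem_rootsOfUnity 10 (g : Kˣ)).1 g.2
  have hev : 2 ∣ Nat.card (rootsOfUnity 10 K) := by
    have hmem : (-1 : Kˣ) ∈ rootsOfUnity 10 K := by
      rw [mem_rootsOfUnity]
      exact Even.neg_one_pow (by decide)
    set e2 : rootsOfUnity 10 K := ⟨-1, hmem⟩ with he2
    have h2 : e2 ^ 2 = 1 := by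
      apply Subtype.ext
      rw [Subgroup.coe_pow]
      show (-1 : Kˣ) ^ 2 = 1
      exact Even.neg_one_pow (by decide)
    have hne : e2 ≠ 1 := by
      intro h
      have : (-1 : K) = 1 := by
        have := congrArg (fun z => ((z : rootsOfUnity 10 K) : Kˣ).1) h
        exact this
      have h2 : (2 : K) = 0 := by linear_combination -this
      exact two_ne_zero h2
    haveI : Fact (Nat.Prime 2) := ⟨Nat.prime_two⟩
    have := orderOf_eq_prime h2 hne
    rw [← this]
    exact orderOf_dvd_natCard _
  have hle : Nat.card (rootsOfUnity 10 K) ≤ 10 := Nat.le_of_dvd (by norm_num) hdvd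
  have hpos : 0 < Nat.card (rootsOfUnity 10 K) := Nat.card_pos
  set c := Nat.card (rootsOfUnity 10 K)
  clear_value c
  interval_cases c <;> revert hdvd hev <;> decide



theorem conj_comm {K₀ K : Type*} [Field K₀] [Field K] [NumberField K₀] [NumberField K]
    [Algebra K₀ K]
    (hquad : Module.finrank K₀ K = 2)
    (htotreal : ∀ φ : K₀ →+* ℂ, ∀ x : K₀, (φ x).im = 0)
    (htotimag : ∀ φ : K →+* ℂ, ∃ x : K, (φ x).im ≠ 0)
    (σ : K ≃ₐ[K₀] K) (hσ : ∃ x : K, σ x ≠ x) :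
    ∀ (φ : K →+* ℂ) (z : K), φ (σ z) = (starRingEnd ℂ) (φ z) := by
  intro φ
  haveI : FiniteDimensional K₀ K := Module.finite_of_finrank_pos (by omega)
  letI : Algebra K₀ ℂ := (φ.comp (algebraMap K₀ K)).toAlgebra
  have hcard : Fintype.card (K →ₐ[K₀] ℂ) = 2 := by
    rw [AlgHom.card, hquad]
  let f₁ : K →ₐ[K₀] ℂ := { toRingHom := φ, commutes' := fun r => rfl }
  let f₂ : K →ₐ[K₀] ℂ :=
    { toRingHom := ((starRingEnd ℂ) : ℂ →+* ℂ).comp φ,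
      commutes' := fun r => by
        show (starRingEnd ℂ) (φ (algebraMap K₀ K r)) = φ (algebraMap K₀ K r)
        rw [Complex.conj_eq_iff_im]
        exact htotreal (φ.comp (algebraMap K₀ K)) r }
  let f₃ : K →ₐ[K₀] ℂ :=
    { toRingHom := φ.comp (σ : K →+* K),
      commutes' := fun r => by
        show φ (σ (algebraMap K₀ K r)) = _
        rw [σ.commutes]
        rfl }
  have h12 : f₁ ≠ f₂ := by
    obtain ⟨x, hx⟩ := htotimag φ
    intro h
    have := congrArg (fun f : K →ₐ[K₀] ℂ => f x) h
    simp only [f₁, f₂] at this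
    have him := congrArg Complex.im this
    simp only [AlgHom.coe_mk, RingHom.coe_comp, Function.comp_apply, Complex.conj_im] at him
    change (φ x).im = ((starRingEnd ℂ) (φ x)).im at him
    rw [Complex.conj_im] at him
    exact hx (by linarith)
  have h13 : f₁ ≠ f₃ := by
    obtain ⟨x, hx⟩ := hσ
    intro h
    have := congrArg (fun f : K →ₐ[K₀] ℂ => f x) h
    change φ x = φ (σ x) at this
    exact hx (φ.injective this.symm)
  have h23 : f₂ = f₃ := by
    by_contra hc
    letI := Classical.decEq (K →ₐ[K₀] ℂ)
    have hcle : ({f₁, f₂, f₃} : Finset (K →ₐ[K₀] ℂ)).card ≤ 2 :=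
      hcard ▸ Finset.card_le_univ _
    rw [Finset.card_insert_of_notMem (by
        simp only [Finset.mem_insert, Finset.mem_singleton]
        push_neg
        exact ⟨h12, h13⟩),
      Finset.card_insert_of_notMem (by
        simp only [Finset.mem_singleton]
        exact hc), Finset.card_singleton] at hcle
    omega
  intro z
  have := congrArg (fun f : K →ₐ[K₀] ℂ => f z) h23
  change (starRingEnd ℂ) (φ z) = φ (σ z) at this
  exact this.symm

theorem aut_inv_of_root {K₀ K : Type*} [Field K₀] [Field K] [NumberField K]
    [Algebra K₀ K] (σ : K ≃ₐ[K₀] K)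
    (hconj : ∀ (φ : K →+* ℂ) (z : K), φ (σ z) = (starRingEnd ℂ) (φ z))
    (θ : K) (n : ℕ) (hn : 0 < n) (hθ : θ ^ n = 1) : σ θ * θ = 1 := by
  haveI : FiniteDimensional ℚ K := Module.finite_of_finrank_pos
    (Module.finrank_pos)
  haveI : Algebra.IsAlgebraic ℚ K := Algebra.IsAlgebraic.of_finite ℚ K
  let φ : K →+* ℂ := (IsAlgClosed.lift (R := ℚ) (S := K) (M := ℂ)).toRingHom
  apply φ.injective
  have hnorm : ‖φ θ‖ = 1 := by
    have : (φ θ) ^ n = 1 := by rw [← map_pow, hθ, map_one]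
    have habs : (‖φ θ‖) ^ n = 1 := by
      rw [← norm_pow, this, norm_one]
    rcases (pow_eq_one_iff_cases).1 habs with h | h | h
    · omega
    · exact h
    · nlinarith [norm_nonneg (φ θ), h.1]
  rw [map_one, map_mul, hconj φ θ, mul_comm, Complex.mul_conj, Complex.normSq_eq_norm_sq,
    hnorm]
  norm_num


theorem no_anti_unit {K₀ K : Type*} [Field K₀] [Field K] [NumberField K₀] [NumberField K]
    [Algebra K₀ K]
    (hdegK₀ : Module.finrank ℚ K₀ = 2)
    (hquad : Module.finrank K₀ K = 2)
    (htotreal : ∀ φ : K₀ →+* ℂ, ∀ x : K₀, (φ x).im = 0)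
    (hprim : ∀ F : Subfield K, Module.finrank ℚ F = 2 →
      ∃ φ : F →+* ℂ, ∀ x : F, (φ x).im = 0)
    (σ : K ≃ₐ[K₀] K)
    (hfix : ∀ y : K, σ y = y → y ∈ Set.range (algebraMap K₀ K))
    (hconj : ∀ (φ : K →+* ℂ) (z : K), φ (σ z) = (starRingEnd ℂ) (φ z))
    (x : K) (hx0 : x ≠ 0) (hxint : IsIntegral ℤ x) (hxinv : IsIntegral ℤ x⁻¹)
    (hanti : σ x = -x) : False := by
  haveI : FiniteDimensional ℚ K₀ := Module.finite_of_finrank_pos (by omega)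
  haveI : FiniteDimensional K₀ K := Module.finite_of_finrank_pos (by omega)
  haveI : Algebra.IsAlgebraic ℚ K₀ := Algebra.IsAlgebraic.of_finite ℚ K₀
  have hainj : Function.Injective (algebraMap K₀ K) := (algebraMap K₀ K).injective
  have hqinj : Function.Injective (algebraMap ℚ K₀) := (algebraMap ℚ K₀).injective
  -- x² is fixed by σ
  have h1 : σ (x ^ 2) = x ^ 2 := by rw [map_pow, hanti]; ring
  obtain ⟨e, he⟩ := hfix _ h1
  set ε : K₀ := -e with hεdef
  have hε : algebraMap K₀ K ε = -(x ^ 2) := by rw [hεdef, map_neg, he]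
  have hεne : ε ≠ 0 := by
    intro h
    rw [h, map_zero] at hε
    have hx2 : x ^ 2 = 0 := by linear_combination hε
    exact hx0 ((pow_eq_zero_iff (by norm_num : (2:ℕ) ≠ 0)).1 hx2)
  obtain ⟨σ₀, ⟨y₀, hy₀⟩, hσ₀inv, hσ₀fix⟩ := quad_aut ℚ K₀ hdegK₀
  -- ε is totally positive
  have hpos : ∀ ψ : K₀ →+* ℂ, (ψ ε).im = 0 ∧ 0 < (ψ ε).re := by
    intro ψ
    refine ⟨htotreal ψ ε, ?_⟩
    letI : Algebra K₀ ℂ := ψ.toAlgebra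
    haveI : Algebra.IsAlgebraic K₀ K := Algebra.IsAlgebraic.of_finite K₀ K
    haveI : NoZeroSMulDivisors K₀ ℂ :=
      inferInstance
    let φ : K →ₐ[K₀] ℂ := IsAlgClosed.lift
    have hψ : ψ ε = φ.toRingHom (algebraMap K₀ K ε) := (φ.commutes ε).symm
    have hcz : (starRingEnd ℂ) (φ.toRingHom x) = -(φ.toRingHom x) := by
      rw [← hconj φ.toRingHom x, hanti, map_neg]
    have hkey : ψ ε = φ.toRingHom x * (starRingEnd ℂ) (φ.toRingHom x) := by
      rw [hψ, hε, map_neg, map_pow, hcz]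
      ring
    rw [hkey, Complex.mul_conj]
    rw [Complex.ofReal_re]
    exact Complex.normSq_pos.2 (map_ne_zero φ.toRingHom |>.2 hx0)
  -- ε is an integral unit
  have hεint : IsIntegral ℤ ε := by
    rw [← isIntegral_algebraMap_iff (R := ℤ) (A := K₀) (B := K) hainj, hε]
    exact (hxint.pow 2).neg
  have hεinv : IsIntegral ℤ ε⁻¹ := by
    rw [← isIntegral_algebraMap_iff (R := ℤ) (A := K₀) (B := K) hainj, map_inv₀, hε]
    have : (-(x ^ 2))⁻¹ = -((x⁻¹) ^ 2) := by
      field_simp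
    rw [this]
    exact (hxinv.pow 2).neg
  have hσεint : IsIntegral ℤ (σ₀ ε) :=
    hεint.map (RingHom.toIntAlgHom (σ₀ : K₀ →+* K₀))
  have hσεinv : IsIntegral ℤ (σ₀ ε)⁻¹ := by
    have h' : (σ₀ ε)⁻¹ = σ₀ ε⁻¹ := (map_inv₀ σ₀ ε).symm
    rw [h']
    exact hεinv.map (RingHom.toIntAlgHom (σ₀ : K₀ →+* K₀))
  have hσεne : σ₀ ε ≠ 0 := fun h => hεne (by
    have := congrArg σ₀ h
    rw [hσ₀inv, map_zero] at this
    exact this)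
  -- the norm of ε is a rational number q
  have hrfix : σ₀ (ε * σ₀ ε) = ε * σ₀ ε := by rw [map_mul, hσ₀inv]; ring
  obtain ⟨q, hq⟩ := hσ₀fix _ hrfix
  have hqne : q ≠ 0 := by
    intro h
    rw [h, map_zero] at hq
    exact hσεne (by
      rcases mul_eq_zero.1 hq.symm with h' | h'
      · exact absurd h' hεne
      · exact h')
  -- q = ±1
  have hqint : IsIntegral ℤ q := by
    rw [← isIntegral_algebraMap_iff (R := ℤ) (A := ℚ) (B := K₀) hqinj, hq]
    exact hεint.mul hσεint
  have hqinvint : IsIntegral ℤ q⁻¹ := by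
    rw [← isIntegral_algebraMap_iff (R := ℤ) (A := ℚ) (B := K₀) hqinj, map_inv₀, hq, mul_inv]
    exact hεinv.mul hσεinv
  obtain ⟨z, hz⟩ := IsIntegrallyClosed.isIntegral_iff.1 hqint
  obtain ⟨z', hz'⟩ := IsIntegrallyClosed.isIntegral_iff.1 hqinvint
  have hzz : z * z' = 1 := by
    have : ((z * z' : ℤ) : ℚ) = ((1 : ℤ) : ℚ) := by
      push_cast
      rw [show ((z:ℚ) = q) from hz, show ((z':ℚ) = q⁻¹) from hz']
      field_simp
    exact_mod_cast this
  have hqpm : q = 1 ∨ q = -1 := by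
    rcases Int.isUnit_iff.1 (IsUnit.of_mul_eq_one z' hzz) with h | h
    · left; rw [← hz, h]; norm_num
    · right; rw [← hz, h]; norm_num
  
  -- pick an embedding of K₀ into ℂ
  let ψ₀ : K₀ →+* ℂ := (IsAlgClosed.lift (R := ℚ) (S := K₀) (M := ℂ)).toRingHom
  have hq1 : q = 1 := by
    have hcast : ψ₀ (algebraMap ℚ K₀ q) = (q : ℂ) := by
      rw [eq_ratCast (algebraMap ℚ K₀) q, map_ratCast]
    have hprod : (q : ℂ) = ψ₀ ε * ψ₀ (σ₀ ε) := by
      rw [← hcast, hq, map_mul]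
    obtain ⟨hA0, hA1⟩ := hpos ψ₀
    obtain ⟨hB0, hB1⟩ := hpos (ψ₀.comp (σ₀ : K₀ →+* K₀))
    have hB0' : (ψ₀ (σ₀ ε)).im = 0 := hB0
    have hB1' : 0 < (ψ₀ (σ₀ ε)).re := hB1
    have hre := congrArg Complex.re hprod
    rw [Complex.mul_re, hA0, hB0', Complex.ratCast_re] at hre
    rcases hqpm with h | h
    · exact h
    · exfalso
      rw [h] at hre
      push_cast at hre
      nlinarith [hA1, hB1']
  have hunit : ε * σ₀ ε = 1 := by rw [← hq, hq1, map_one]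
  have hse : σ₀ ε = ε⁻¹ := by
    field_simp
    linear_combination hunit
  set lam : K₀ := 1 + ε⁻¹ with hlamdef
  have hlamσ : σ₀ lam = ε * lam := by
    rw [hlamdef, map_add, map_one, map_inv₀, hse, inv_inv]
    field_simp
    ring
  have hlamne : lam ≠ 0 := by
    intro h
    obtain ⟨hA0, hA1⟩ := hpos ψ₀
    have hz : ψ₀ lam = 0 := by rw [h, map_zero]
    rw [hlamdef, map_add, map_one, map_inv₀] at hz
    have hrepr : ψ₀ ε = ((ψ₀ ε).re : ℂ) := Complex.ext rfl (by simp [hA0])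
    rw [hrepr, ← Complex.ofReal_inv, ← Complex.ofReal_one, ← Complex.ofReal_add] at hz
    have hz' := congrArg Complex.re hz
    rw [Complex.ofReal_re, Complex.zero_re] at hz'
    nlinarith [inv_pos.2 hA1]
  have hpfix : σ₀ (lam * σ₀ lam) = lam * σ₀ lam := by rw [map_mul, hσ₀inv]; ring
  obtain ⟨q', hq'⟩ := hσ₀fix _ hpfix
  have hq'2 : algebraMap ℚ K₀ q' = ε * lam ^ 2 := by rw [hq', hlamσ]; ring
  have htow : ∀ c : ℚ, algebraMap K₀ K (algebraMap ℚ K₀ c) = (c : K) := by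
    intro c
    rw [eq_ratCast (algebraMap ℚ K₀) c, map_ratCast]
  set t : K := algebraMap K₀ K lam * x with htdef
  have ht2 : t ^ 2 = -((q' : K)) := by
    rw [htdef]
    have hx2 : x ^ 2 = -(algebraMap K₀ K ε) := by rw [hε]; ring
    calc (algebraMap K₀ K lam * x) ^ 2
        = (algebraMap K₀ K lam) ^ 2 * x ^ 2 := by ring
      _ = algebraMap K₀ K (lam ^ 2) * (-(algebraMap K₀ K ε)) := by rw [map_pow, hx2]
      _ = -(algebraMap K₀ K (ε * lam ^ 2)) := by rw [map_mul]; ring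
      _ = -((q' : K)) := by rw [← hq'2, htow]
  haveI : Algebra.IsAlgebraic ℚ K := Algebra.IsAlgebraic.of_finite ℚ K
  let φ₀ : K →+* ℂ := (IsAlgClosed.lift (R := ℚ) (S := K) (M := ℂ)).toRingHom
  have hA : (φ₀ (algebraMap K₀ K lam)).im = 0 := htotreal (φ₀.comp (algebraMap K₀ K)) lam
  have hAne : φ₀ (algebraMap K₀ K lam) ≠ 0 :=
    (map_ne_zero φ₀).2 ((map_ne_zero (algebraMap K₀ K)).2 hlamne)
  have hzre : (φ₀ x).re = 0 := by
    have hcc := hconj φ₀ x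
    rw [hanti, map_neg] at hcc
    have := congrArg Complex.re hcc
    rw [Complex.neg_re, Complex.conj_re] at this
    linarith
  have hzne : φ₀ x ≠ 0 := (map_ne_zero φ₀).2 hx0
  set w : ℂ := φ₀ (algebraMap K₀ K lam) * φ₀ x with hwdef
  have hwre : w.re = 0 := by rw [hwdef, Complex.mul_re, hA, hzre]; ring
  have hwne : w ≠ 0 := mul_ne_zero hAne hzne
  have hwim : w.im ≠ 0 := by
    intro h
    exact hwne (Complex.ext (by rw [hwre, Complex.zero_re]) (by rw [h, Complex.zero_im]))
  have hsq : w ^ 2 = -((q' : ℂ)) := by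
    rw [hwdef, ← map_mul, ← map_pow, ← htdef, ht2, map_neg, map_ratCast]
  have hqpos : 0 < q' := by
    have hre := congrArg Complex.re hsq
    rw [pow_two, Complex.mul_re, hwre, Complex.neg_re, Complex.ratCast_re] at hre
    have h2 : (0:ℝ) < (q':ℝ) := by nlinarith [mul_self_pos.2 hwim]
    exact_mod_cast h2
  exact no_imag_sqrt hprim q' hqpos t ht2



/-- Let `K` be a primitive quartic CM field with maximal real subfield `K₀`
(`K₀` totally real quadratic, `K/K₀` a totally imaginary quadratic extension, and `K` has
no imaginary quadratic subfield).  Then every unit of `𝓞 K` is the product of a root of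
unity of `K` and a unit of `𝓞 K₀`, and the group of roots of unity of `K` has order
`2` or `10`. -/
theorem stmt_0
    (K₀ K : Type*) [Field K₀] [Field K] [NumberField K₀] [NumberField K] [Algebra K₀ K]
    -- K is quartic over ℚ and quadratic over its real quadratic subfield K₀
    (hdegK : Module.finrank ℚ K = 4)
    (hdegK₀ : Module.finrank ℚ K₀ = 2)
    (hquad : Module.finrank K₀ K = 2)
    -- K₀ is totally real
    (htotreal : ∀ φ : K₀ →+* ℂ, ∀ x : K₀, (φ x).im = 0)
    -- K is totally imaginary
    (htotimag : ∀ φ : K →+* ℂ, ∃ x : K, (φ x).im ≠ 0)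
    -- K is primitive: it contains no imaginary quadratic subfield
    (hprim : ∀ F : Subfield K, Module.finrank ℚ F = 2 →
      ∃ φ : F →+* ℂ, ∀ x : F, (φ x).im = 0) :
    (∀ u : (𝓞 K)ˣ, ∃ ζ : K, (∃ n : ℕ, 0 < n ∧ ζ ^ n = 1) ∧
      ∃ v : (𝓞 K₀)ˣ,
        algebraMap (𝓞 K) K (u : 𝓞 K) =
          ζ * algebraMap K₀ K (algebraMap (𝓞 K₀) K₀ (v : 𝓞 K₀))) ∧
    (Nat.card {x : K // ∃ n : ℕ, 0 < n ∧ x ^ n = 1} = 2 ∨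
     Nat.card {x : K // ∃ n : ℕ, 0 < n ∧ x ^ n = 1} = 10) := by
  have h10 : ∀ x : K, (∃ n : ℕ, 0 < n ∧ x ^ n = 1) → x ^ 10 = 1 := by
    rintro x ⟨n, hn, hx⟩
    exact tors_pow_ten hdegK hprim x n hn hx
  -- integral inverse of a root-of-unity multiple helper
  have hinvint : ∀ a : K, a ≠ 0 → IsIntegral ℤ a → (∃ m : ℕ, 0 < m ∧ a ^ m = 1) →
      IsIntegral ℤ a⁻¹ := by
    rintro a ha hint ⟨m, hm, ham⟩
    have : a ^ (m - 1) = a⁻¹ :=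
      eq_inv_of_mul_eq_one_left (by rw [← pow_succ, Nat.sub_add_cancel hm, ham])
    rw [← this]
    exact hint.pow _
  refine ⟨?_, count_tors h10⟩
  intro u
  obtain ⟨σ, hσne, hσinv, hσfix⟩ := quad_aut K₀ K hquad
  have hconj := conj_comm hquad htotreal htotimag σ hσne
  set ue : K := algebraMap (𝓞 K) K (u : 𝓞 K) with hue
  have huint : IsIntegral ℤ ue := RingOfIntegers.isIntegral_coe _
  have huinvrep : algebraMap (𝓞 K) K ((u⁻¹ : (𝓞 K)ˣ) : 𝓞 K) = ue⁻¹ := by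
    apply eq_inv_of_mul_eq_one_left
    have hmu : ((u⁻¹ : (𝓞 K)ˣ) : 𝓞 K) * (u : 𝓞 K) = 1 := by
      simp
    rw [hue, ← map_mul, hmu, map_one]
  have huinv : IsIntegral ℤ ue⁻¹ := by
    rw [← huinvrep]; exact RingOfIntegers.isIntegral_coe _
  have hune : ue ≠ 0 := by
    rw [hue]
    exact RingOfIntegers.coe_ne_zero_iff.2 (Units.ne_zero u)
  set w : K := σ ue * ue⁻¹ with hw
  have hwint : IsIntegral ℤ w :=
    (huint.map (RingHom.toIntAlgHom (σ : K →+* K))).mul huinv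
  have hwnorm : ∀ φ : K →+* ℂ, ‖φ w‖ = 1 := by
    intro φ
    rw [hw, map_mul, hconj φ ue, map_inv₀, norm_mul, norm_inv, RCLike.norm_conj]
    have : ‖φ ue‖ ≠ 0 := by
      simp only [ne_eq, norm_eq_zero]
      exact (map_ne_zero φ).2 hune
    field_simp
  obtain ⟨n, hn, hwn⟩ := NumberField.Embeddings.pow_eq_one_of_norm_eq_one K ℂ hwint hwnorm
  have hw10 : w ^ 10 = 1 := h10 w ⟨n, hn, hwn⟩
  have hwne : w ≠ 0 := by
    intro h
    rw [h] at hw10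
    simp at hw10
  have hsue : σ ue = w * ue := by rw [hw]; field_simp
  have hw5 : w ^ 5 = 1 ∨ w ^ 5 = -1 := by
    have : (w ^ 5) * (w ^ 5) = 1 := by rw [← pow_add]; exact hw10
    exact mul_self_eq_one_iff.1 this
  rcases hw5 with h5 | h5
  · -- w = (w^3)^2 : u / w^3 is fixed
    set θ : K := w ^ 3 with hθdef
    have hθ10 : θ ^ 10 = 1 := by
      rw [hθdef, ← pow_mul, mul_comm, pow_mul, hw10, one_pow]
    have hθne : θ ≠ 0 := pow_ne_zero _ hwne
    have hσθ : σ θ = θ⁻¹ :=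
      eq_inv_of_mul_eq_one_left (aut_inv_of_root σ hconj θ 10 (by norm_num) hθ10)
    have hθsq : θ * θ = w ^ 6 := by rw [hθdef, ← pow_add]
    have hw6 : w ^ 6 = w := by
      calc w ^ 6 = w ^ 5 * w := by ring
        _ = w := by rw [h5, one_mul]
    set xx : K := ue * θ with hxxdef
    have hθinv : θ⁻¹ = θ ^ 9 :=
      (eq_inv_of_mul_eq_one_left (by rw [← pow_succ]; exact hθ10)).symm
    have hfixx : σ xx = xx := by
      apply mul_right_cancel₀ hθne
      rw [hxxdef, map_mul, hsue, hσθ, hθinv]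
      linear_combination (w * ue) * hθ10 - ue * (hθsq.trans hw6)
    obtain ⟨y, hy⟩ := hσfix xx hfixx
    have hxxint : IsIntegral ℤ xx := huint.mul (hwint.pow 3)
    have hxxne : xx ≠ 0 := mul_ne_zero hune hθne
    have hθint : IsIntegral ℤ θ := hwint.pow 3
    have hxxinv : IsIntegral ℤ xx⁻¹ := by
      rw [hxxdef, mul_inv, hθinv]
      exact huinv.mul (hθint.pow 9)
    have hainj : Function.Injective (algebraMap K₀ K) := (algebraMap K₀ K).injective
    have hymem : IsIntegral ℤ y := by
      have h' : IsIntegral ℤ (algebraMap K₀ K y) := hy ▸ hxxint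
      exact (isIntegral_algebraMap_iff (R := ℤ) (A := K₀) (B := K) hainj).1 h'
    have hyne : y ≠ 0 := by
      intro h
      rw [h, map_zero] at hy
      exact hxxne hy.symm
    have hyinv : IsIntegral ℤ y⁻¹ := by
      have h2 : algebraMap K₀ K y⁻¹ = xx⁻¹ := by rw [map_inv₀, hy]
      have h' : IsIntegral ℤ (algebraMap K₀ K y⁻¹) := h2 ▸ hxxinv
      exact (isIntegral_algebraMap_iff (R := ℤ) (A := K₀) (B := K) hainj).1 h'
    refine ⟨θ⁻¹, ⟨10, by norm_num, by rw [inv_pow, hθ10, inv_one]⟩, ?_⟩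
    have hval : (⟨y, hymem⟩ : 𝓞 K₀) * (⟨y⁻¹, hyinv⟩ : 𝓞 K₀) = 1 := by
      apply NumberField.RingOfIntegers.ext
      show algebraMap (𝓞 K₀) K₀ _ = algebraMap (𝓞 K₀) K₀ 1
      change y * y⁻¹ = 1
      exact mul_inv_cancel₀ hyne
    have hval2 : (⟨y⁻¹, hyinv⟩ : 𝓞 K₀) * (⟨y, hymem⟩ : 𝓞 K₀) = 1 := by
      rw [mul_comm]; exact hval
    refine ⟨⟨⟨y, hymem⟩, ⟨y⁻¹, hyinv⟩, hval, hval2⟩, ?_⟩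
    show ue = θ⁻¹ * algebraMap K₀ K (algebraMap (𝓞 K₀) K₀ ⟨y, hymem⟩)
    change ue = θ⁻¹ * algebraMap K₀ K y
    rw [hy, hxxdef, mul_comm ue θ, ← mul_assoc,
      inv_mul_cancel₀ hθne, one_mul]
  · -- w ^ 5 = -1 : contradiction
    exfalso
    set θ : K := (-w) ^ 3 with hθdef
    have hmw10 : (-w) ^ 10 = 1 := by
      rw [neg_pow]
      norm_num [hw10]
    have hθ10 : θ ^ 10 = 1 := by rw [hθdef, ← pow_mul, mul_comm, pow_mul, hmw10, one_pow]
    have hθne : θ ≠ 0 := pow_ne_zero _ (neg_ne_zero.2 hwne)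
    have hσθ : σ θ = θ⁻¹ :=
      eq_inv_of_mul_eq_one_left (aut_inv_of_root σ hconj θ 10 (by norm_num) hθ10)
    have hθsq : θ * θ = -w := by
      have h5' : (-w) ^ 5 = 1 := by
        rw [neg_pow]
        norm_num [h5]
      calc θ * θ = (-w) ^ 5 * (-w) := by rw [hθdef]; ring
        _ = -w := by rw [h5', one_mul]
    set xx : K := ue * θ with hxxdef
    have hxxne : xx ≠ 0 := mul_ne_zero hune hθne
    have hθint : IsIntegral ℤ θ := (hwint.neg).pow 3
    have hxxint : IsIntegral ℤ xx := huint.mul hθint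
    have hθinv : θ⁻¹ = θ ^ 9 :=
      (eq_inv_of_mul_eq_one_left (by rw [← pow_succ]; exact hθ10)).symm
    have hxxinv : IsIntegral ℤ xx⁻¹ := by
      rw [hxxdef, mul_inv, hθinv]
      exact huinv.mul (hθint.pow 9)
    have hantixx : σ xx = -xx := by
      apply mul_right_cancel₀ hθne
      rw [hxxdef, map_mul, hsue, hσθ, hθinv]
      linear_combination (w * ue) * hθ10 + ue * hθsq
    exact no_anti_unit hdegK₀ hquad htotreal hprim σ hσfix hconj xx hxxne hxxint hxxinv hantixx
end

section
/- For every positive definite symmetric real 2×2 matrix Y, one has (3/4)·m₁(Y)·m₂(Y) ≤ det Y ≤ m₁(Y)·m₂(Y). -/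
open Matrix

/-- The integral quadratic form attached to a real 2×2 matrix `Y`: `p ↦ pᵀ Y p`
for integer vectors `p ∈ ℤ²`. -/
noncomputable def quadForm (Y : Matrix (Fin 2) (Fin 2) ℝ) (p : Fin 2 → ℤ) : ℝ :=
  (fun i => (p i : ℝ)) ⬝ᵥ Y.mulVec (fun i => (p i : ℝ))

/-- The first consecutive minimum `m₁(Y)`: the infimum (minimum) of `pᵀYp` over nonzero
integer vectors `p`. -/
noncomputable def m1 (Y : Matrix (Fin 2) (Fin 2) ℝ) : ℝ :=
  sInf {r : ℝ | ∃ p : Fin 2 → ℤ, p ≠ 0 ∧ quadForm Y p = r}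

/-- The second consecutive minimum `m₂(Y)`: the infimum (minimum) of `qᵀYq` over integer
vectors `q` linearly independent of a vector `p` attaining `m₁(Y)` (the value does not
depend on the choice of such `p`). -/
noncomputable def m2 (Y : Matrix (Fin 2) (Fin 2) ℝ) : ℝ :=
  sInf {r : ℝ | ∃ p q : Fin 2 → ℤ, p ≠ 0 ∧ quadForm Y p = m1 Y ∧
    LinearIndependent ℤ ![p, q] ∧ quadForm Y q = r}

noncomputable def bil (Y : Matrix (Fin 2) (Fin 2) ℝ) (p q : Fin 2 → ℤ) : ℝ :=
  (fun i => (p i : ℝ)) ⬝ᵥ Y.mulVec (fun i => (q i : ℝ))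

lemma quadForm_coords (Y : Matrix (Fin 2) (Fin 2) ℝ) (p : Fin 2 → ℤ) :
    quadForm Y p = Y 0 0 * (p 0 : ℝ)^2 + (Y 0 1 + Y 1 0) * (p 0 : ℝ) * (p 1 : ℝ)
      + Y 1 1 * (p 1 : ℝ)^2 := by
  simp [quadForm, dotProduct, Matrix.mulVec, Fin.sum_univ_two]
  ring

lemma bil_coords (Y : Matrix (Fin 2) (Fin 2) ℝ) (p q : Fin 2 → ℤ) :
    bil Y p q = Y 0 0 * (p 0 : ℝ) * (q 0 : ℝ) + Y 0 1 * (p 0 : ℝ) * (q 1 : ℝ)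
      + Y 1 0 * (p 1 : ℝ) * (q 0 : ℝ) + Y 1 1 * (p 1 : ℝ) * (q 1 : ℝ) := by
  simp [bil, dotProduct, Matrix.mulVec, Fin.sum_univ_two]
  ring

lemma key_identity (Y : Matrix (Fin 2) (Fin 2) ℝ) (hsymm : Y.IsSymm) (p q : Fin 2 → ℤ) :
    quadForm Y p * quadForm Y q - (bil Y p q)^2
      = Y.det * ((p 0 * q 1 - p 1 * q 0 : ℤ) : ℝ)^2 := by
  have h := hsymm.apply 0 1
  rw [quadForm_coords, quadForm_coords, bil_coords, Matrix.det_fin_two, h]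
  push_cast
  ring

lemma quadForm_pos (Y : Matrix (Fin 2) (Fin 2) ℝ) (hpos : Y.PosDef) (p : Fin 2 → ℤ)
    (hp : p ≠ 0) : 0 < quadForm Y p := by
  apply (show ∀ x : Fin 2 → ℝ, x ≠ 0 → 0 < x ⬝ᵥ Y *ᵥ x from
    fun x hx => by simpa using hpos.dotProduct_mulVec_pos hx)
  intro h
  apply hp
  funext i
  have h2 : (p i : ℝ) = 0 := congrFun h i
  exact_mod_cast h2

lemma quadForm_nonneg (Y : Matrix (Fin 2) (Fin 2) ℝ) (hpos : Y.PosDef) (p : Fin 2 → ℤ) :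
    0 ≤ quadForm Y p := by
  rcases eq_or_ne p 0 with rfl | hp
  · simp [quadForm_coords]
  · exact (quadForm_pos Y hpos p hp).le

lemma int_abs_le_sq (x : ℤ) : |x| ≤ x^2 := by
  rcases eq_or_ne x 0 with rfl | hx
  · simp
  · have h1 : 1 ≤ |x| := Int.one_le_abs hx
    calc |x| = |x| * 1 := (mul_one _).symm
    _ ≤ |x| * |x| := mul_le_mul_of_nonneg_left h1 (abs_nonneg x)
    _ = x^2 := by rw [← abs_mul, ← sq, abs_sq]

lemma diag_pos (Y : Matrix (Fin 2) (Fin 2) ℝ) (hpos : Y.PosDef) :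
    0 < Y 0 0 ∧ 0 < Y 1 1 := by
  constructor
  · have h := quadForm_pos Y hpos ![1, 0] (by intro h; have := congrFun h 0; simp at this)
    rw [quadForm_coords] at h
    simpa using h
  · have h := quadForm_pos Y hpos ![0, 1] (by intro h; have := congrFun h 1; simp at this)
    rw [quadForm_coords] at h
    simpa using h

lemma finite_sub (Y : Matrix (Fin 2) (Fin 2) ℝ) (hsymm : Y.IsSymm) (hpos : Y.PosDef)
    (C : ℝ) : {p : Fin 2 → ℤ | quadForm Y p ≤ C}.Finite := by
  rcases lt_or_ge C 0 with hC | hC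
  · convert Set.finite_empty
    ext p
    simp only [Set.mem_setOf_eq, Set.mem_empty_iff_false, iff_false, not_le]
    exact lt_of_lt_of_le hC (quadForm_nonneg Y hpos p)
  · have hb := hsymm.apply 0 1
    have hdet := hpos.det_pos
    have hdf := Matrix.det_fin_two Y
    obtain ⟨ha, hc⟩ := diag_pos Y hpos
    set M : ℝ := max (C * Y 1 1 / Y.det) (C * Y 0 0 / Y.det) with hM
    set K : ℤ := ⌈M⌉ with hK
    apply Set.Finite.subset (Set.Finite.pi (fun _ : Fin 2 => Set.finite_Icc (-K) K))
    intro p hp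
    simp only [Set.mem_setOf_eq] at hp
    have hQ := quadForm_coords Y p
    have bound : ∀ i : Fin 2, ((p i : ℝ))^2 ≤ M := by
      intro i
      fin_cases i
      · have h1 : Y.det * (p 0 : ℝ)^2 ≤ Y 1 1 * quadForm Y p := by
          have hid : Y 1 1 * quadForm Y p
              = Y.det * (p 0 : ℝ)^2 + (Y 0 1 * (p 0 : ℝ) + Y 1 1 * (p 1 : ℝ))^2 := by
            rw [hQ, hdf, hb]; ring
          nlinarith [sq_nonneg (Y 0 1 * (p 0 : ℝ) + Y 1 1 * (p 1 : ℝ))]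
        have h2 : Y 1 1 * quadForm Y p ≤ Y 1 1 * C := mul_le_mul_of_nonneg_left hp hc.le
        have : (p 0 : ℝ)^2 ≤ C * Y 1 1 / Y.det := by
          rw [le_div_iff₀ hdet]; nlinarith
        exact le_trans this (le_max_left _ _)
      · have h1 : Y.det * (p 1 : ℝ)^2 ≤ Y 0 0 * quadForm Y p := by
          have hid : Y 0 0 * quadForm Y p
              = Y.det * (p 1 : ℝ)^2 + (Y 0 0 * (p 0 : ℝ) + Y 0 1 * (p 1 : ℝ))^2 := by
            rw [hQ, hdf, hb]; ring
          nlinarith [sq_nonneg (Y 0 0 * (p 0 : ℝ) + Y 0 1 * (p 1 : ℝ))]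
        have h2 : Y 0 0 * quadForm Y p ≤ Y 0 0 * C := mul_le_mul_of_nonneg_left hp ha.le
        have : (p 1 : ℝ)^2 ≤ C * Y 0 0 / Y.det := by
          rw [le_div_iff₀ hdet]; nlinarith
        exact le_trans this (le_max_right _ _)
    intro i _
    have h2 : ((p i)^2 : ℤ) ≤ K := by
      have : ((p i : ℝ))^2 ≤ (K : ℝ) := le_trans (bound i) (Int.le_ceil M)
      exact_mod_cast this
    have h3 : |p i| ≤ K := le_trans (int_abs_le_sq (p i)) h2
    rw [Set.mem_Icc]
    exact abs_le.mp h3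

lemma isLeast_of_quad (Y : Matrix (Fin 2) (Fin 2) ℝ) (hsymm : Y.IsSymm) (hpos : Y.PosDef)
    (S : Set ℝ) (hne : S.Nonempty) (hsub : ∀ r ∈ S, ∃ q : Fin 2 → ℤ, quadForm Y q = r) :
    IsLeast S (sInf S) := by
  obtain ⟨c0, hc0⟩ := hne
  have hfin : (S ∩ Set.Iic c0).Finite := by
    apply Set.Finite.subset ((finite_sub Y hsymm hpos c0).image (quadForm Y))
    rintro r ⟨hr, hrc⟩
    obtain ⟨q, hq⟩ := hsub r hr
    exact ⟨q, by simpa [hq] using hrc, hq⟩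
  have hne' : (S ∩ Set.Iic c0).Nonempty := ⟨c0, hc0, Set.self_mem_Iic⟩
  have hmem : sInf (S ∩ Set.Iic c0) ∈ S ∩ Set.Iic c0 := hne'.csInf_mem hfin
  have hleast : IsLeast S (sInf (S ∩ Set.Iic c0)) := by
    refine ⟨hmem.1, fun x hx => ?_⟩
    rcases le_or_gt x c0 with h | h
    · exact csInf_le hfin.bddBelow ⟨hx, h⟩
    · exact le_trans hmem.2 h.le
  rw [hleast.csInf_eq]; exact hleast

lemma linIndep_iff_det (p q : Fin 2 → ℤ) :
    LinearIndependent ℤ ![p, q] ↔ p 0 * q 1 - p 1 * q 0 ≠ 0 := by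
  rw [LinearIndependent.pair_iff]
  constructor
  · intro h hd
    have h1 := h (q 1) (-(p 1)) (by
      funext i
      fin_cases i
      · simp only [Fin.zero_eta, Fin.mk_one, Pi.add_apply, Pi.smul_apply, smul_eq_mul,
          Pi.zero_apply, neg_mul]
        linear_combination hd
      · simp only [Fin.zero_eta, Fin.mk_one, Pi.add_apply, Pi.smul_apply, smul_eq_mul,
          Pi.zero_apply, neg_mul]
        ring)
    have h2 := h (q 0) (-(p 0)) (by
      funext i
      fin_cases i
      · simp only [Fin.zero_eta, Fin.mk_one, Pi.add_apply, Pi.smul_apply, smul_eq_mul,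
          Pi.zero_apply, neg_mul]
        ring
      · simp only [Fin.zero_eta, Fin.mk_one, Pi.add_apply, Pi.smul_apply, smul_eq_mul,
          Pi.zero_apply, neg_mul]
        linear_combination -hd)
    have hp0 : p 0 = 0 := by omega
    have hp1 : p 1 = 0 := by omega
    have := h 1 0 (by
      funext i
      fin_cases i <;>
        simp [Fin.zero_eta, Fin.mk_one, Pi.add_apply, Pi.smul_apply, hp0, hp1])
    exact one_ne_zero this.1
  · intro hd s t hst
    have e0 : s * p 0 + t * q 0 = 0 := by simpa using congrFun hst 0
    have e1 : s * p 1 + t * q 1 = 0 := by simpa using congrFun hst 1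
    constructor
    · have hs : s * (p 0 * q 1 - p 1 * q 0) = 0 := by linear_combination q 1 * e0 - q 0 * e1
      rcases mul_eq_zero.mp hs with h | h
      · exact h
      · exact absurd h hd
    · have ht : t * (p 0 * q 1 - p 1 * q 0) = 0 := by linear_combination p 0 * e1 - p 1 * e0
      rcases mul_eq_zero.mp ht with h | h
      · exact h
      · exact absurd h hd

lemma m1_least (Y : Matrix (Fin 2) (Fin 2) ℝ) (hsymm : Y.IsSymm) (hpos : Y.PosDef) :
    IsLeast {r : ℝ | ∃ p : Fin 2 → ℤ, p ≠ 0 ∧ quadForm Y p = r} (m1 Y) := by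
  rw [m1]
  apply isLeast_of_quad Y hsymm hpos
  · exact ⟨quadForm Y ![1, 0], ![1, 0], by intro h; have := congrFun h 0; simp at this, rfl⟩
  · rintro r ⟨p, -, hp⟩
    exact ⟨p, hp⟩

lemma m1_pos (Y : Matrix (Fin 2) (Fin 2) ℝ) (hsymm : Y.IsSymm) (hpos : Y.PosDef) :
    0 < m1 Y := by
  obtain ⟨⟨p, hp, hpq⟩, -⟩ := m1_least Y hsymm hpos
  rw [← hpq]
  exact quadForm_pos Y hpos p hp

lemma m2_least (Y : Matrix (Fin 2) (Fin 2) ℝ) (hsymm : Y.IsSymm) (hpos : Y.PosDef) :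
    IsLeast {r : ℝ | ∃ p q : Fin 2 → ℤ, p ≠ 0 ∧ quadForm Y p = m1 Y ∧
      LinearIndependent ℤ ![p, q] ∧ quadForm Y q = r} (m2 Y) := by
  rw [m2]
  apply isLeast_of_quad Y hsymm hpos
  · obtain ⟨⟨p, hp, hpq⟩, -⟩ := m1_least Y hsymm hpos
    refine ⟨quadForm Y ![-(p 1), p 0], p, ![-(p 1), p 0], hp, hpq, ?_, rfl⟩
    rw [linIndep_iff_det]
    simp only [Matrix.cons_val_one, Matrix.head_cons, Matrix.cons_val_zero]
    intro h
    apply hp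
    funext i
    fin_cases i <;> simp <;> nlinarith [sq_nonneg (p 0), sq_nonneg (p 1)]
  · rintro r ⟨p, q, -, -, -, hq⟩
    exact ⟨q, hq⟩

/-- for every positive definite symmetric real 2×2 matrix `Y`,
`(3/4)·m₁(Y)·m₂(Y) ≤ det Y ≤ m₁(Y)·m₂(Y)`. -/
theorem stmt_3 (Y : Matrix (Fin 2) (Fin 2) ℝ) (hsymm : Y.IsSymm) (hpos : Y.PosDef) :
    3 / 4 * (m1 Y * m2 Y) ≤ Y.det ∧ Y.det ≤ m1 Y * m2 Y := by
  have hm1 := m1_least Y hsymm hpos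
  have hm2 := m2_least Y hsymm hpos
  have hm1pos := m1_pos Y hsymm hpos
  have hdet := hpos.det_pos
  constructor
  · -- lower bound
    obtain ⟨p, hp, hpm⟩ := hm1.1
    -- p is primitive
    have hgcd : Int.gcd (p 0) (p 1) = 1 := by
      set g : ℕ := Int.gcd (p 0) (p 1) with hg
      have hgne : g ≠ 0 := by
        intro h
        rw [hg, Int.gcd_eq_zero_iff] at h
        apply hp
        funext i; fin_cases i <;> simp [h.1, h.2]
      set p' : Fin 2 → ℤ := fun i => p i / (g : ℤ) with hp'
      have h0 : p 0 = (g : ℤ) * p' 0 := (Int.mul_ediv_cancel' (Int.gcd_dvd_left _ _)).symm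
      have h1 : p 1 = (g : ℤ) * p' 1 := (Int.mul_ediv_cancel' (Int.gcd_dvd_right _ _)).symm
      have hp'ne : p' ≠ 0 := by
        intro h
        apply hp
        funext i
        have h0' : p' 0 = 0 := congrFun h 0
        have h1' : p' 1 = 0 := congrFun h 1
        have hc0 : p 0 = 0 := by rw [h0, h0', mul_zero]
        have hc1 : p 1 = 0 := by rw [h1, h1', mul_zero]
        fin_cases i
        · exact hc0
        · exact hc1
      have hQ : quadForm Y p = (g : ℝ)^2 * quadForm Y p' := by
        rw [quadForm_coords, quadForm_coords, h0, h1]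
        push_cast
        ring
      have hle : m1 Y ≤ quadForm Y p' := hm1.2 ⟨p', hp'ne, rfl⟩
      have hpos' := quadForm_pos Y hpos p' hp'ne
      by_contra hne
      have h2 : 2 ≤ g := by omega
      have h2' : (2 : ℝ) ≤ (g : ℝ) := by exact_mod_cast h2
      have h4 : (4 : ℝ) ≤ (g : ℝ)^2 := by nlinarith
      have h5 : (4 : ℝ) * quadForm Y p' ≤ (g : ℝ)^2 * quadForm Y p' :=
        mul_le_mul_of_nonneg_right h4 hpos'.le
      linarith [hpm, hQ, hle, hpos', h5]
    obtain ⟨u, v, huv⟩ := (Int.isCoprime_iff_gcd_eq_one.mpr hgcd)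
    set q0 : Fin 2 → ℤ := ![-v, u] with hq0
    have hd0 : p 0 * q0 1 - p 1 * q0 0 = 1 := by
      simp only [hq0, Matrix.cons_val_one, Matrix.head_cons, Matrix.cons_val_zero]
      linear_combination huv
    set k : ℤ := round (-(bil Y p q0) / m1 Y) with hk
    set q : Fin 2 → ℤ := fun i => q0 i + k * p i with hq
    have hd : p 0 * q 1 - p 1 * q 0 = 1 := by
      simp only [hq]
      linear_combination hd0
    have hBshift : bil Y p q = bil Y p q0 + (k : ℝ) * quadForm Y p := by
      rw [bil_coords, bil_coords, quadForm_coords]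
      simp only [hq]
      push_cast
      ring
    have hB : |bil Y p q| ≤ m1 Y / 2 := by
      have hr := abs_sub_round (-(bil Y p q0) / m1 Y)
      have heq : bil Y p q = -(m1 Y * ((-(bil Y p q0) / m1 Y) - (k : ℝ))) := by
        rw [hBshift, hpm]
        field_simp
        ring
      rw [heq, abs_neg, abs_mul, abs_of_pos hm1pos]
      calc m1 Y * |(-(bil Y p q0) / m1 Y) - (k : ℝ)| ≤ m1 Y * (1/2) :=
        mul_le_mul_of_nonneg_left hr hm1pos.le
      _ = m1 Y / 2 := by ring
    have hlin : LinearIndependent ℤ ![p, q] := by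
      rw [linIndep_iff_det, hd]
      exact one_ne_zero
    have hm2le : m2 Y ≤ quadForm Y q := hm2.2 ⟨p, q, hp, hpm, hlin, rfl⟩
    have hkey := key_identity Y hsymm p q
    rw [hd, hpm] at hkey
    have hm1m2 : m1 Y ≤ m2 Y := by
      obtain ⟨p', q', hp', -, hlin', hq'⟩ := hm2.1
      have hq'ne : q' ≠ 0 := by
        have := hlin'.ne_zero 1
        simpa using this
      rw [← hq']
      exact hm1.2 ⟨q', hq'ne, rfl⟩
    have hB2 : (bil Y p q)^2 ≤ (m1 Y / 2)^2 := by
      rw [← sq_abs]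
      exact pow_le_pow_left₀ (abs_nonneg _) hB 2
    have hkey' : m1 Y * quadForm Y q - (bil Y p q)^2 = Y.det := by
      rw [hkey]; norm_num
    have hx1 : m1 Y * m2 Y ≤ m1 Y * quadForm Y q :=
      mul_le_mul_of_nonneg_left hm2le hm1pos.le
    have hx2 : m1 Y * m1 Y ≤ m1 Y * m2 Y :=
      mul_le_mul_of_nonneg_left hm1m2 hm1pos.le
    nlinarith [hkey', hx1, hx2, hB2]
  · -- upper bound
    obtain ⟨p, q, hp, hpm, hlin, hqm⟩ := hm2.1
    have hd : p 0 * q 1 - p 1 * q 0 ≠ 0 := (linIndep_iff_det p q).mp hlin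
    have hd2 : (1 : ℝ) ≤ ((p 0 * q 1 - p 1 * q 0 : ℤ) : ℝ)^2 := by
      have h1 : (1 : ℤ) ≤ (p 0 * q 1 - p 1 * q 0)^2 := by
        have := Int.one_le_abs hd
        nlinarith [sq_abs (p 0 * q 1 - p 1 * q 0)]
      exact_mod_cast h1
    have hkey := key_identity Y hsymm p q
    rw [hpm, hqm] at hkey
    nlinarith [sq_nonneg (bil Y p q), hdet]
end

section
/- Let Y be a positive definite symmetric real 2×2 matrix. Then for i = 1, 2 one has m_i(Y⁻¹) = m_i(Y) / det Y. -/
open Matrix Pointwise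

/-- The rotation `J : p ↦ (-p₁, p₀)` as a linear equivalence of `ℤ²`. -/
def Jmap : (Fin 2 → ℤ) ≃ₗ[ℤ] (Fin 2 → ℤ) where
  toFun p := ![-p 1, p 0]
  invFun p := ![p 1, -p 0]
  map_add' p q := by funext i; fin_cases i <;> simp <;> ring
  map_smul' c p := by funext i; fin_cases i <;> simp
  left_inv p := by funext i; fin_cases i <;> simp
  right_inv p := by funext i; fin_cases i <;> simp

lemma quadForm_inv (Y : Matrix (Fin 2) (Fin 2) ℝ) (hsymm : Y.IsSymm) (hdet : Y.det ≠ 0)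
    (p : Fin 2 → ℤ) : quadForm Y⁻¹ p = quadForm Y (Jmap p) / Y.det := by
  have h10 : Y 1 0 = Y 0 1 := by
    have := hsymm; rw [Matrix.IsSymm] at this
    conv_lhs => rw [← this]
    simp [Matrix.transpose_apply]
  rw [Matrix.inv_def]
  simp only [quadForm, dotProduct, mulVec, Fin.sum_univ_two, Matrix.smul_apply,
    Matrix.adjugate_fin_two, Ring.inverse_eq_inv', Jmap, LinearEquiv.coe_mk, LinearMap.coe_mk, AddHom.coe_mk]
  simp only [Matrix.cons_val_zero, Matrix.cons_val_one, Matrix.head_cons,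
    Matrix.of_apply, smul_eq_mul, Int.cast_neg]
  field_simp
  rw [h10]
  ring

lemma jmap_linIndep (p q : Fin 2 → ℤ) :
    LinearIndependent ℤ ![Jmap p, Jmap q] ↔ LinearIndependent ℤ ![p, q] := by
  have hcomp : ![Jmap p, Jmap q] = (Jmap : (Fin 2 → ℤ) →ₗ[ℤ] (Fin 2 → ℤ)) ∘ ![p, q] := by
    funext i; fin_cases i <;> rfl
  rw [hcomp]
  constructor
  · exact fun h => h.of_comp _
  · exact fun h => h.map' _ Jmap.ker

/-- for a positive definite symmetric real 2×2 matrix `Y`, one has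
`m_i(Y⁻¹) = m_i(Y) / det Y` for `i = 1, 2`. -/
theorem stmt_5 (Y : Matrix (Fin 2) (Fin 2) ℝ) (hsymm : Y.IsSymm) (hpos : Y.PosDef) :
    m1 Y⁻¹ = m1 Y / Y.det ∧ m2 Y⁻¹ = m2 Y / Y.det := by
  have hdetpos : 0 < Y.det := hpos.det_pos
  have hdet : Y.det ≠ 0 := ne_of_gt hdetpos
  have hq := quadForm_inv Y hsymm hdet
  have hne : ∀ p : Fin 2 → ℤ, p ≠ 0 ↔ Jmap p ≠ 0 := by
    intro p
    rw [not_iff_not]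
    exact (LinearEquiv.map_eq_zero_iff Jmap).symm
  have hset1 : {r : ℝ | ∃ p : Fin 2 → ℤ, p ≠ 0 ∧ quadForm Y⁻¹ p = r}
      = (Y.det)⁻¹ • {r : ℝ | ∃ p : Fin 2 → ℤ, p ≠ 0 ∧ quadForm Y p = r} := by
    ext r
    simp only [Set.mem_smul_set, Set.mem_setOf_eq]
    constructor
    · rintro ⟨p, hp, rfl⟩
      exact ⟨quadForm Y (Jmap p), ⟨Jmap p, (hne p).mp hp, rfl⟩,
        by rw [hq p, smul_eq_mul, inv_mul_eq_div]⟩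
    · rintro ⟨s, ⟨p, hp, rfl⟩, rfl⟩
      refine ⟨Jmap.symm p, ?_, ?_⟩
      · simp [LinearEquiv.map_eq_zero_iff, hp]
      · rw [hq, Jmap.apply_symm_apply, smul_eq_mul, inv_mul_eq_div]
  have h1 : m1 Y⁻¹ = m1 Y / Y.det := by
    rw [m1, hset1, Real.sInf_smul_of_nonneg (inv_nonneg.mpr hdetpos.le), smul_eq_mul,
      inv_mul_eq_div, m1]
  refine ⟨h1, ?_⟩
  have hm1iff : ∀ p : Fin 2 → ℤ, quadForm Y⁻¹ p = m1 Y⁻¹ ↔ quadForm Y (Jmap p) = m1 Y := by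
    intro p
    rw [hq p, h1]; exact div_left_inj' hdet
  have hset2 : {r : ℝ | ∃ p q : Fin 2 → ℤ, p ≠ 0 ∧ quadForm Y⁻¹ p = m1 Y⁻¹ ∧
        LinearIndependent ℤ ![p, q] ∧ quadForm Y⁻¹ q = r}
      = (Y.det)⁻¹ • {r : ℝ | ∃ p q : Fin 2 → ℤ, p ≠ 0 ∧ quadForm Y p = m1 Y ∧
        LinearIndependent ℤ ![p, q] ∧ quadForm Y q = r} := by
    ext r
    simp only [Set.mem_smul_set, Set.mem_setOf_eq]
    constructor
    · rintro ⟨p, q, hp, hm, hli, rfl⟩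
      refine ⟨quadForm Y (Jmap q), ⟨Jmap p, Jmap q, (hne p).mp hp, (hm1iff p).mp hm,
        (jmap_linIndep p q).mpr hli, rfl⟩, by rw [hq q, smul_eq_mul, inv_mul_eq_div]⟩
    · rintro ⟨s, ⟨p, q, hp, hm, hli, rfl⟩, rfl⟩
      refine ⟨Jmap.symm p, Jmap.symm q, ?_, ?_, ?_, ?_⟩
      · simp [LinearEquiv.map_eq_zero_iff, hp]
      · rw [hm1iff, Jmap.apply_symm_apply]; exact hm
      · rw [← jmap_linIndep]; simpa [Jmap.apply_symm_apply] using hli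
      · rw [hq, Jmap.apply_symm_apply, smul_eq_mul, inv_mul_eq_div]
  rw [m2, hset2, Real.sInf_smul_of_nonneg (inv_nonneg.mpr hdetpos.le), smul_eq_mul,
    inv_mul_eq_div, m2]
end

section
/- Let Z = [[z₁, z₃],[z₃, z₂]] ∈ H₂ satisfy |Re z₁| ≤ 1/2 and Im z₁ < 1/2, and let N₀ ∈ Sp₄(ℤ) be the matrix with rows (0,0,−1,0), (0,1,0,0), (1,0,0,0), (0,0,0,1). Then det N₀*(Z) = z₁, |z₁|² ≤ 1/2, and det Im N₀(Z) ≥ 2 · det Im Z. -/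
open Matrix

/-- An integer 2×2 matrix viewed as a complex matrix. -/
noncomputable def cmat (A : Matrix (Fin 2) (Fin 2) ℤ) : Matrix (Fin 2) (Fin 2) ℂ :=
  A.map (Int.cast : ℤ → ℂ)

/-- The (entrywise) imaginary part of a complex 2×2 matrix. -/
noncomputable def imPart (Z : Matrix (Fin 2) (Fin 2) ℂ) : Matrix (Fin 2) (Fin 2) ℝ :=
  Z.map Complex.im

/-- The upper-left block `A` of the matrix `N₀ ∈ Sp₄(ℤ)` with rows
`(0,0,−1,0), (0,1,0,0), (1,0,0,0), (0,0,0,1)`. -/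
def N0A : Matrix (Fin 2) (Fin 2) ℤ := !![0, 0; 0, 1]

/-- The upper-right block `B` of `N₀`. -/
def N0B : Matrix (Fin 2) (Fin 2) ℤ := !![-1, 0; 0, 0]

/-- The lower-left block `C` of `N₀`. -/
def N0C : Matrix (Fin 2) (Fin 2) ℤ := !![1, 0; 0, 0]

/-- The lower-right block `D` of `N₀`. -/
def N0D : Matrix (Fin 2) (Fin 2) ℤ := !![0, 0; 0, 1]

/-- for `Z = [[z₁,z₃],[z₃,z₂]] ∈ H₂` with `|Re z₁| ≤ 1/2` and `Im z₁ < 1/2`,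
and `N₀ ∈ Sp₄(ℤ)` with rows `(0,0,−1,0), (0,1,0,0), (1,0,0,0), (0,0,0,1)`, one has
`det N₀*(Z) = z₁`, `|z₁|² ≤ 1/2`, and `det Im N₀(Z) ≥ 2 · det Im Z`. -/
theorem stmt_8 (Z : Matrix (Fin 2) (Fin 2) ℂ) (hsymm : Z.IsSymm) (hposdef : (imPart Z).PosDef)
    (hre : |(Z 0 0).re| ≤ 1 / 2) (him : (Z 0 0).im < 1 / 2) :
    (cmat N0C * Z + cmat N0D).det = Z 0 0 ∧
    ‖Z 0 0‖ ^ 2 ≤ 1 / 2 ∧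
    2 * (imPart Z).det ≤
      (imPart ((cmat N0A * Z + cmat N0B) * (cmat N0C * Z + cmat N0D)⁻¹)).det := by
  set a := Z 0 0 with ha
  set b := Z 0 1 with hb
  set d := Z 1 1 with hd
  have hc : Z 1 0 = b := hsymm.apply 0 1
  have hy1 : 0 < a.im := by
    have := hposdef.dotProduct_mulVec_pos (x := ![1, 0]) (by simp [funext_iff, Fin.forall_fin_two])
    simpa [imPart, dotProduct, mulVec, Fin.sum_univ_two] using this
  have hdet : 0 < (imPart Z).det := hposdef.det_pos
  have hDr : (imPart Z).det = a.im * d.im - b.im * b.im := by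
    rw [Matrix.det_fin_two]; simp [imPart, hc]; rfl
  have ha0 : a ≠ 0 := fun h => by simp [h] at hy1
  have hCD : cmat N0C * Z + cmat N0D = !![a, b; 0, 1] := by
    ext i j
    fin_cases i <;> fin_cases j <;>
      simp [cmat, N0C, N0D, Matrix.mul_apply, Fin.sum_univ_two] <;> rfl
  have hAB : cmat N0A * Z + cmat N0B = !![-1, 0; b, d] := by
    ext i j
    fin_cases i <;> fin_cases j <;>
      simp [cmat, N0A, N0B, Matrix.mul_apply, Fin.sum_univ_two, hc] <;> rfl
  have h1 : (cmat N0C * Z + cmat N0D).det = a := by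
    rw [hCD, Matrix.det_fin_two_of]; ring
  have habs : ‖a‖ ^ 2 ≤ 1 / 2 := by
    rw [Complex.sq_norm, Complex.normSq_apply]
    have h1 : a.re ^ 2 ≤ (1/2)^2 := sq_le_sq' (by linarith [abs_le.mp hre |>.1]) (abs_le.mp hre |>.2)
    nlinarith
  refine ⟨h1, habs, ?_⟩
  have hinv : (cmat N0C * Z + cmat N0D)⁻¹ = !![a⁻¹, -b * a⁻¹; 0, 1] := by
    rw [hCD]
    apply inv_eq_right_inv
    ext i j
    fin_cases i <;> fin_cases j <;>
        simp [Matrix.mul_apply, Fin.sum_univ_two, mul_inv_cancel₀ ha0] <;>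
      field_simp <;> ring
  rw [hAB, hinv]
  have hprod : (!![-1, 0; b, d] : Matrix (Fin 2) (Fin 2) ℂ) * !![a⁻¹, -b * a⁻¹; 0, 1]
      = !![-a⁻¹, b * a⁻¹; b * a⁻¹, d - b * b * a⁻¹] := by
    ext i j
    fin_cases i <;> fin_cases j <;>
      simp [Matrix.mul_apply, Fin.sum_univ_two] <;> field_simp <;> ring
  rw [hprod]
  have hn' : 0 < Complex.normSq a := Complex.normSq_pos.mpr ha0
  have hn : Complex.normSq a ≠ 0 := hn'.ne'
  have e1 : (-a⁻¹).im = a.im / Complex.normSq a := by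
    simp [Complex.inv_im]; ring
  have e2 : (b * a⁻¹).im = (b.im * a.re - b.re * a.im) / Complex.normSq a := by
    rw [Complex.mul_im, Complex.inv_re, Complex.inv_im]; field_simp; ring
  have e3 : (d - b * b * a⁻¹).im
      = d.im - (2 * b.re * b.im * a.re - (b.re * b.re - b.im * b.im) * a.im)
          / Complex.normSq a := by
    rw [Complex.sub_im, Complex.mul_im, Complex.mul_re, Complex.mul_im,
      Complex.inv_re, Complex.inv_im]
    field_simp; ring
  have key : ∀ x y v p q : ℝ, x * x + y * y ≠ 0 →
      y / (x * x + y * y) * (v - (2 * p * q * x - (p * p - q * q) * y) / (x * x + y * y)) -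
        (q * x - p * y) / (x * x + y * y) * ((q * x - p * y) / (x * x + y * y))
      = (y * v - q * q) / (x * x + y * y) := by
    intro x y v p q h
    obtain ⟨s, hs⟩ : ∃ s, s = x * x + y * y := ⟨_, rfl⟩
    rw [← hs] at h ⊢
    field_simp
    subst hs
    ring
  have hdetN : (imPart !![-a⁻¹, b * a⁻¹; b * a⁻¹, d - b * b * a⁻¹]).det
      = (a.im * d.im - b.im * b.im) / Complex.normSq a := by
    rw [Matrix.det_fin_two]
    show (-a⁻¹).im * (d - b * b * a⁻¹).im - (b * a⁻¹).im * (b * a⁻¹).im = _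
    rw [e1, e2, e3]
    have hns : Complex.normSq a = a.re * a.re + a.im * a.im := Complex.normSq_apply a
    rw [hns] at hn ⊢
    exact key a.re a.im d.im b.re b.im hn
  rw [hdetN, hDr]
  have hsq : Complex.normSq a ≤ 1 / 2 := by
    have := habs; rwa [Complex.sq_norm] at this
  have hDpos : 0 < a.im * d.im - b.im * b.im := hDr ▸ hdet
  rw [le_div_iff₀ hn']
  nlinarith [mul_nonneg hDpos.le (by linarith : (0:ℝ) ≤ 1 - 2 * Complex.normSq a)]
end

section
/- Let K be a CM field of degree 2g with maximal totally real subfield K₀, and suppose the different D_{K₀/ℚ} of K₀ is principal, generated by δ ∈ K₀. Let b be a fractional O_{K₀}-ideal with ℤ-basis b₁, …, b_g, and let b₁*, …, b_g* ∈ K₀ be the dual basis with respect to the trace form, i.e. Tr_{K₀/ℚ}(b_i b_j*) = δ_{ij} (Kronecker delta). Let z ∈ K with z ≠ z̄ and set ξ = (z − z̄)⁻¹ δ⁻¹ and E(u, v) = Tr_{K/ℚ}(ξ · u · v̄) for u, v ∈ K. Then for all 1 ≤ i, j ≤ g: E(z b_i, z b_j) = 0, E(δ b_i*, δ b_j*)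 = 0, and E(z b_i, δ b_j*) = δ_{ij}; in other words, z b₁, …, z b_g, δ b₁*, …, δ b_g* is a symplectic basis of the ℤ-module a = z·b + b⁻¹ with respect to the alternating form E, and in particular E takes integer values on a × a. -/
open NumberField nonZeroDivisors

set_option maxHeartbeats 1600000 in
/-- Let `K` be a CM field of degree `2g` with maximal totally real subfield
`K₀` whose different `D_{K₀/ℚ}` is principal, generated by `δ`.  Let `b` be a fractional
`𝓞 K₀`-ideal with ℤ-basis `b₁, …, b_g` and trace-dual basis `b₁*, …, b_g*`.  For `z ∈ K`
with `z ≠ z̄`, put `ξ = (z − z̄)⁻¹δ⁻¹` and `E(u,v) = Tr_{K/ℚ}(ξ·u·v̄)`.  Then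
`E(z bᵢ, z bⱼ) = 0`, `E(δ bᵢ*, δ bⱼ*) = 0` and `E(z bᵢ, δ bⱼ*) = δᵢⱼ`; in particular `E`
takes integer values on `a × a` where `a = z·b + b⁻¹`. -/
theorem stmt_9
    (g : ℕ) (hg : 0 < g)
    (K₀ K : Type*) [Field K₀] [Field K] [NumberField K₀] [NumberField K] [Algebra K₀ K]
    (hdegK₀ : Module.finrank ℚ K₀ = g)
    (hdegK : Module.finrank ℚ K = 2 * g)
    (hquad : Module.finrank K₀ K = 2)
    (htotreal : ∀ φ : K₀ →+* ℂ, ∀ x : K₀, (φ x).im = 0)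
    (htotimag : ∀ φ : K →+* ℂ, ∃ x : K, (φ x).im ≠ 0)
    (conj : K ≃ₐ[K₀] K) (hconj : ∃ x : K, conj x ≠ x)
    -- the different of K₀ is principal, generated by δ
    (δ : 𝓞 K₀) (hδ : differentIdeal ℤ (𝓞 K₀) = Ideal.span {δ})
    -- b is a fractional 𝓞 K₀-ideal with ℤ-basis b₁, …, b_g
    (b : FractionalIdeal (𝓞 K₀)⁰ K₀) (hb : b ≠ 0)
    (bv : Fin g → K₀)
    (hbv_indep : LinearIndependent ℤ bv)
    (hbv_span : ∀ x : K₀, x ∈ b ↔ x ∈ Submodule.span ℤ (Set.range bv))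
    -- the dual basis with respect to the trace form: Tr_{K₀/ℚ}(bᵢ bⱼ*) = δᵢⱼ
    (bvd : Fin g → K₀)
    (hdual : ∀ i j, Algebra.trace ℚ K₀ (bv i * bvd j) = if i = j then 1 else 0)
    (z : K) (hz : z ≠ conj z)
    (ξ : K) (hξ : ξ = (z - conj z)⁻¹ * (algebraMap K₀ K (algebraMap (𝓞 K₀) K₀ δ))⁻¹)
    (E : K → K → ℚ) (hE : ∀ u v : K, E u v = Algebra.trace ℚ K (ξ * u * conj v)) :
    (∀ i j, E (z * algebraMap K₀ K (bv i)) (z * algebraMap K₀ K (bv j)) = 0) ∧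
    (∀ i j, E (algebraMap K₀ K (algebraMap (𝓞 K₀) K₀ δ * bvd i))
              (algebraMap K₀ K (algebraMap (𝓞 K₀) K₀ δ * bvd j)) = 0) ∧
    (∀ i j, E (z * algebraMap K₀ K (bv i))
              (algebraMap K₀ K (algebraMap (𝓞 K₀) K₀ δ * bvd j)) =
        if i = j then 1 else 0) ∧
    -- in particular, E takes integer values on a × a for a = z·b + b⁻¹
    (∀ x₁ x₂ y₁ y₂ : K₀, x₁ ∈ b → x₂ ∈ b →
      y₁ ∈ (b⁻¹ : FractionalIdeal (𝓞 K₀)⁰ K₀) → y₂ ∈ (b⁻¹ : FractionalIdeal (𝓞 K₀)⁰ K₀) →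
      ∃ n : ℤ, E (z * algebraMap K₀ K x₁ + algebraMap K₀ K y₁)
                 (z * algebraMap K₀ K x₂ + algebraMap K₀ K y₂) = n) := by
  classical
  haveI tower : IsScalarTower ℚ K₀ K :=
    IsScalarTower.of_algebraMap_eq' (Subsingleton.elim _ _)
  haveI : FiniteDimensional K₀ K := FiniteDimensional.right ℚ K₀ K
  have einj : Function.Injective (algebraMap K₀ K) := (algebraMap K₀ K).injective
  have hz' : z - conj z ≠ 0 := sub_ne_zero.mpr (fun h => hz h)
  -- `conj` is an involution on `z`
  have hσσ : conj (conj z) = z := by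
    have hdep : ¬ LinearIndependent K₀ ![(1 : K), z, z * z] := by
      intro h
      have h3 := h.fintype_card_le_finrank
      rw [hquad] at h3
      simp at h3
    obtain ⟨c, hcsum, i, hi⟩ := Fintype.not_linearIndependent_iff.mp hdep
    simp only [Fin.sum_univ_three, Matrix.cons_val_zero, Matrix.cons_val_one, Matrix.head_cons,
      Matrix.cons_val_two, Matrix.tail_cons, Algebra.smul_def, mul_one] at hcsum
    by_cases h2 : c 2 = 0
    · exfalso
      by_cases h1 : c 1 = 0
      · rw [h1, h2] at hcsum
        simp only [map_zero, zero_mul, add_zero] at hcsum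
        have h0 : c 0 = 0 := einj (by simpa using hcsum)
        fin_cases i <;> simp_all
      · have hc1K : algebraMap K₀ K (c 1) ≠ 0 := fun h => h1 (einj (by simpa using h))
        have hzval : z = algebraMap K₀ K (-(c 0 / c 1)) := by
          rw [h2] at hcsum
          simp only [map_zero, zero_mul, add_zero] at hcsum
          rw [map_neg, map_div₀]
          field_simp
          linear_combination hcsum
        exact hz (by rw [hzval, AlgEquiv.commutes])
    · have hcsum2 := congrArg conj hcsum
      simp only [map_add, map_mul, AlgEquiv.commutes, map_zero] at hcsum2
      have hfac : (z - conj z) *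
          (algebraMap K₀ K (c 1) + algebraMap K₀ K (c 2) * (z + conj z)) = 0 := by
        linear_combination hcsum - hcsum2
      have hfac2 := (mul_eq_zero.mp hfac).resolve_left hz'
      have hc2K : algebraMap K₀ K (c 2) ≠ 0 := fun h => h2 (einj (by simpa using h))
      have hsum : z + conj z = algebraMap K₀ K (-(c 1 / c 2)) := by
        rw [map_neg, map_div₀]
        field_simp
        linear_combination hfac2
      have h' := congrArg conj hsum
      rw [map_add, AlgEquiv.commutes] at h'
      linear_combination h' - hsum
  -- trace is invariant under conj
  have hσ : ∀ w : K, Algebra.trace ℚ K (conj w) = Algebra.trace ℚ K w := fun w =>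
    Algebra.trace_eq_of_algEquiv (conj.restrictScalars ℚ) w
  have hT0 : ∀ w : K, conj w = -w → Algebra.trace ℚ K w = 0 := by
    intro w h
    have h1 := hσ w
    rw [h, map_neg] at h1
    linarith
  -- δ is nonzero
  have hδcoe := coeIdeal_differentIdeal ℤ ℚ K₀ (𝓞 K₀)
  have hδ0 : (algebraMap (𝓞 K₀) K₀ δ) ≠ 0 := by
    intro h0
    have hδz : δ = 0 := by
      have : Function.Injective (algebraMap (𝓞 K₀) K₀) :=
        IsFractionRing.injective (𝓞 K₀) K₀
      exact this (by simpa using h0)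
    rw [hδz] at hδ
    rw [hδ] at hδcoe
    simp only [Set.singleton_zero, Ideal.span_zero, FractionalIdeal.coeIdeal_bot] at hδcoe
    have hd0 : FractionalIdeal.dual ℤ ℚ (1 : FractionalIdeal (𝓞 K₀)⁰ K₀) ≠ 0 :=
      FractionalIdeal.dual_ne_zero ℤ ℚ (@one_ne_zero (FractionalIdeal (𝓞 K₀)⁰ K₀) _ _ _)
    have := mul_inv_cancel₀ hd0
    rw [← hδcoe] at this
    simp at this
  have hdK : (algebraMap K₀ K (algebraMap (𝓞 K₀) K₀ δ)) ≠ 0 := fun h => hδ0 (einj (by simpa using h))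
  -- the dual of 1 is generated by δ⁻¹
  have hdual1 : FractionalIdeal.dual ℤ ℚ (1 : FractionalIdeal (𝓞 K₀)⁰ K₀)
      = FractionalIdeal.spanSingleton (𝓞 K₀)⁰ ((algebraMap (𝓞 K₀) K₀ δ)⁻¹) := by
    rw [hδ, FractionalIdeal.coeIdeal_span_singleton] at hδcoe
    have hd0 : FractionalIdeal.dual ℤ ℚ (1 : FractionalIdeal (𝓞 K₀)⁰ K₀) ≠ 0 :=
      FractionalIdeal.dual_ne_zero ℤ ℚ (@one_ne_zero (FractionalIdeal (𝓞 K₀)⁰ K₀) _ _ _)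
    have hmul := mul_inv_cancel₀ hd0
    rw [← hδcoe] at hmul
    calc FractionalIdeal.dual ℤ ℚ (1 : FractionalIdeal (𝓞 K₀)⁰ K₀)
        = FractionalIdeal.dual ℤ ℚ (1 : FractionalIdeal (𝓞 K₀)⁰ K₀) *
            (FractionalIdeal.spanSingleton (𝓞 K₀)⁰ (algebraMap (𝓞 K₀) K₀ δ) *
             FractionalIdeal.spanSingleton (𝓞 K₀)⁰ ((algebraMap (𝓞 K₀) K₀ δ)⁻¹)) := by
          rw [FractionalIdeal.spanSingleton_mul_spanSingleton, mul_inv_cancel₀ hδ0,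
            FractionalIdeal.spanSingleton_one, mul_one]
      _ = FractionalIdeal.spanSingleton (𝓞 K₀)⁰ ((algebraMap (𝓞 K₀) K₀ δ)⁻¹) := by
          rw [← mul_assoc, hmul, one_mul]
  -- integrality of traces of elements of 𝓞/δ
  have hInt : ∀ a : 𝓞 K₀, ∃ n : ℤ,
      Algebra.trace ℚ K₀ (algebraMap (𝓞 K₀) K₀ a * (algebraMap (𝓞 K₀) K₀ δ)⁻¹) = n := by
    intro a
    have hmem : algebraMap (𝓞 K₀) K₀ a * (algebraMap (𝓞 K₀) K₀ δ)⁻¹ ∈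
        FractionalIdeal.dual ℤ ℚ (1 : FractionalIdeal (𝓞 K₀)⁰ K₀) := by
      rw [hdual1, FractionalIdeal.mem_spanSingleton]
      exact ⟨a, by rw [Algebra.smul_def]⟩
    rw [FractionalIdeal.mem_dual (@one_ne_zero (FractionalIdeal (𝓞 K₀)⁰ K₀) _ _ _)] at hmem
    obtain ⟨n, hn⟩ := hmem 1 (FractionalIdeal.one_mem_one _)
    refine ⟨n, ?_⟩
    rw [Algebra.traceForm_apply, mul_one] at hn
    rw [← hn]
    simp
  -- trace of algebraMap is twice the trace
  have hTr2 : ∀ x : K₀, Algebra.trace ℚ K (algebraMap K₀ K x) = 2 * Algebra.trace ℚ K₀ x := by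
    intro x
    rw [← Algebra.trace_trace (S := K₀), Algebra.trace_algebraMap, hquad, two_smul, map_add,
      two_mul]
  -- key trace computation
  have hC : ∀ x : K₀, Algebra.trace ℚ K ((z - conj z)⁻¹ * z * algebraMap K₀ K x)
      = Algebra.trace ℚ K₀ x := by
    intro x
    set t := (z - conj z)⁻¹ * z * algebraMap K₀ K x with ht
    have hct : conj t = (conj z - z)⁻¹ * conj z * algebraMap K₀ K x := by
      rw [ht, map_mul, map_mul, map_inv₀, map_sub, hσσ, AlgEquiv.commutes]
    have hinv : (conj z - z)⁻¹ = -(z - conj z)⁻¹ := by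
      rw [← neg_sub z (conj z), inv_neg]
    have hsum : t + conj t = algebraMap K₀ K x := by
      rw [hct, hinv, ht]
      have : (z - conj z)⁻¹ * z * algebraMap K₀ K x +
          -(z - conj z)⁻¹ * conj z * algebraMap K₀ K x
          = ((z - conj z)⁻¹ * (z - conj z)) * algebraMap K₀ K x := by ring
      rw [this, inv_mul_cancel₀ hz', one_mul]
    have h1 := hσ t
    have h2 := map_add (Algebra.trace ℚ K) t (conj t)
    rw [hsum, hTr2 x] at h2
    linarith
  -- conj ξ = -ξ
  have hξc : conj ξ = -ξ := by
    rw [hξ, map_mul, map_inv₀, map_inv₀, map_sub, hσσ, AlgEquiv.commutes,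
      ← neg_sub z (conj z), inv_neg]
    ring
  -- trace of ξ z (e x)
  have hT2 : ∀ x : K₀, Algebra.trace ℚ K (ξ * z * algebraMap K₀ K x)
      = Algebra.trace ℚ K₀ (x * (algebraMap (𝓞 K₀) K₀ δ)⁻¹) := by
    intro x
    rw [← hC (x * (algebraMap (𝓞 K₀) K₀ δ)⁻¹)]
    congr 1
    rw [hξ, map_mul, map_inv₀]
    ring
  have hT3 : ∀ x : K₀, Algebra.trace ℚ K (ξ * conj z * algebraMap K₀ K x)
      = -Algebra.trace ℚ K₀ (x * (algebraMap (𝓞 K₀) K₀ δ)⁻¹) := by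
    intro x
    have hcw : conj (ξ * conj z * algebraMap K₀ K x) = -(ξ * z * algebraMap K₀ K x) := by
      rw [map_mul, map_mul, hξc, hσσ, AlgEquiv.commutes]
      ring
    have h := hσ (ξ * conj z * algebraMap K₀ K x)
    rw [hcw, map_neg, hT2 x] at h
    linarith
  refine ⟨?_, ?_, ?_, ?_⟩
  · intro i j
    rw [hE]
    apply hT0
    simp only [map_mul, hξc, hσσ, AlgEquiv.commutes]
    ring
  · intro i j
    rw [hE]
    apply hT0
    simp only [map_mul, hξc, hσσ, AlgEquiv.commutes]
    ring
  · intro i j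
    have key : ξ * (z * algebraMap K₀ K (bv i)) *
        conj (algebraMap K₀ K (algebraMap (𝓞 K₀) K₀ δ * bvd j))
        = (z - conj z)⁻¹ * z * algebraMap K₀ K (bv i * bvd j) := by
      rw [AlgEquiv.commutes, hξ,
        map_mul (algebraMap K₀ K) (algebraMap (𝓞 K₀) K₀ δ) (bvd j),
        map_mul (algebraMap K₀ K) (bv i) (bvd j)]
      field_simp
    rw [hE, key, hC, hdual]
  · intro x₁ x₂ y₁ y₂ hx₁ hx₂ hy₁ hy₂
    have hprod : ∀ x y : K₀, x ∈ b → y ∈ (b⁻¹ : FractionalIdeal (𝓞 K₀)⁰ K₀) →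
        ∃ a : 𝓞 K₀, algebraMap (𝓞 K₀) K₀ a = x * y := by
      intro x y hx hy
      have hxy : x * y ∈ b * b⁻¹ := FractionalIdeal.mul_mem_mul hx hy
      rw [mul_inv_cancel₀ hb] at hxy
      exact (FractionalIdeal.mem_one_iff _).mp hxy
    obtain ⟨a₁, ha₁⟩ := hprod x₁ y₂ hx₁ hy₂
    obtain ⟨a₂, ha₂⟩ := hprod x₂ y₁ hx₂ hy₁
    obtain ⟨n₁, hn₁⟩ := hInt a₁
    obtain ⟨n₂, hn₂⟩ := hInt a₂
    refine ⟨n₁ - n₂, ?_⟩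
    rw [hE]
    have hconj2 : conj (z * algebraMap K₀ K x₂ + algebraMap K₀ K y₂)
        = conj z * algebraMap K₀ K x₂ + algebraMap K₀ K y₂ := by
      rw [map_add, map_mul, AlgEquiv.commutes, AlgEquiv.commutes]
    rw [hconj2]
    have hexp : ξ * (z * algebraMap K₀ K x₁ + algebraMap K₀ K y₁) *
        (conj z * algebraMap K₀ K x₂ + algebraMap K₀ K y₂)
        = (ξ * z * conj z * algebraMap K₀ K (x₁ * x₂)) + (ξ * z * algebraMap K₀ K (x₁ * y₂))
          + (ξ * conj z * algebraMap K₀ K (y₁ * x₂)) + (ξ * algebraMap K₀ K (y₁ * y₂)) := by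
      simp only [map_mul]
      ring
    rw [hexp, map_add, map_add, map_add]
    have h1 : Algebra.trace ℚ K (ξ * z * conj z * algebraMap K₀ K (x₁ * x₂)) = 0 := by
      apply hT0
      simp only [map_mul, hξc, hσσ, AlgEquiv.commutes]
      ring
    have h4 : Algebra.trace ℚ K (ξ * algebraMap K₀ K (y₁ * y₂)) = 0 := by
      apply hT0
      simp only [map_mul, hξc, hσσ, AlgEquiv.commutes]
      ring
    rw [h1, h4, hT2, hT3]
    rw [show x₁ * y₂ = algebraMap (𝓞 K₀) K₀ a₁ from ha₁.symm,
      show y₁ * x₂ = algebraMap (𝓞 K₀) K₀ a₂ from by rw [mul_comm]; exact ha₂.symm]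
    rw [hn₁, hn₂]
    push_cast
    ring
end

section
/- Let K be a primitive quartic CM field with real quadratic subfield K₀ of discriminant Δ₀; let δ ∈ K₀ satisfy δ² = Δ₀, and let ω ∈ O_{K₀} be such that O_{K₀} = ℤ[ω]. Suppose z ∈ K is such that z·O_{K₀} + O_{K₀} is a fractional O_K-ideal, and let φ₁, φ₂ : K → ℂ be embeddings satisfying Im φ₁(z) > 0 > Im φ₂(z) and φ₁(δ) > 0 > φ₂(δ). Then the symmetric 2×2 complex matrix Z_z with entries (Z_z)₁₁ = φ₁(zδ⁻¹ω²) + φ₂(zδ⁻¹ω²), (Z_z)₁₂ = (Z_z)₂₁ = φ₁(zδ⁻¹ω) + φ₂(zδ⁻¹ω), (Z_z)₂₂ = φ₁(zδ⁻¹) + φ₂(zδ⁻¹) lies in the Siegel upper half space H₂, i.e. Im Z_z is positive definite. -/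
open NumberField nonZeroDivisors Matrix

/-- Let `K` be a primitive quartic CM field with real quadratic subfield
`K₀` of discriminant `Δ₀`, `δ ∈ K₀` with `δ² = Δ₀`, and `ω` with `𝓞 K₀ = ℤ[ω]`.
Suppose `z ∈ K` is such that `z·𝓞 K₀ + 𝓞 K₀` is a fractional `𝓞 K`-ideal, and
`φ₁, φ₂ : K → ℂ` are embeddings with `Im φ₁(z) > 0 > Im φ₂(z)` and
`φ₁(δ) > 0 > φ₂(δ)`.  Then the symmetric matrix
`Z_z = [[φ₁(zδ⁻¹ω²)+φ₂(zδ⁻¹ω²), φ₁(zδ⁻¹ω)+φ₂(zδ⁻¹ω)], [φ₁(zδ⁻¹ω)+φ₂(zδ⁻¹ω), φ₁(zδ⁻¹)+φ₂(zδ⁻¹)]]`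
lies in the Siegel upper half space `H₂`, i.e. `Im Z_z` is positive definite. -/
theorem stmt_13
    (K₀ K : Type*) [Field K₀] [Field K] [NumberField K₀] [NumberField K] [Algebra K₀ K]
    (hdegK : Module.finrank ℚ K = 4)
    (hdegK₀ : Module.finrank ℚ K₀ = 2)
    (hquad : Module.finrank K₀ K = 2)
    (htotreal : ∀ φ : K₀ →+* ℂ, ∀ x : K₀, (φ x).im = 0)
    (htotimag : ∀ φ : K →+* ℂ, ∃ x : K, (φ x).im ≠ 0)
    (hprim : ∀ F : Subfield K, Module.finrank ℚ F = 2 →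
      ∃ φ : F →+* ℂ, ∀ x : F, (φ x).im = 0)
    -- δ ∈ K₀ is a square root of the discriminant Δ₀ of K₀
    (δ : K₀) (hδ : δ ^ 2 = (NumberField.discr K₀ : K₀))
    -- ω generates 𝓞 K₀ over ℤ: 𝓞 K₀ = ℤ[ω]
    (ω : 𝓞 K₀) (hω : Algebra.adjoin ℤ ({ω} : Set (𝓞 K₀)) = ⊤)
    -- z·𝓞 K₀ + 𝓞 K₀ is a fractional 𝓞 K-ideal (an 𝓞 K-submodule of K)
    (z : K)
    (hz : ∀ r : 𝓞 K, ∀ u v : 𝓞 K₀, ∃ u' v' : 𝓞 K₀,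
      algebraMap (𝓞 K) K r *
          (z * algebraMap K₀ K (algebraMap (𝓞 K₀) K₀ u) +
            algebraMap K₀ K (algebraMap (𝓞 K₀) K₀ v)) =
        z * algebraMap K₀ K (algebraMap (𝓞 K₀) K₀ u') +
          algebraMap K₀ K (algebraMap (𝓞 K₀) K₀ v'))
    -- embeddings with Im φ₁(z) > 0 > Im φ₂(z) and φ₁(δ) > 0 > φ₂(δ)
    (φ₁ φ₂ : K →+* ℂ)
    (hzsign : 0 < (φ₁ z).im ∧ (φ₂ z).im < 0)
    (hδsign : 0 < (φ₁ (algebraMap K₀ K δ)).re ∧ (φ₂ (algebraMap K₀ K δ)).re < 0)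
    -- the matrix Z_z
    (Z : Matrix (Fin 2) (Fin 2) ℂ)
    (hZ11 : Z 0 0 =
      φ₁ (z * (algebraMap K₀ K δ)⁻¹ * algebraMap K₀ K (algebraMap (𝓞 K₀) K₀ ω) ^ 2) +
      φ₂ (z * (algebraMap K₀ K δ)⁻¹ * algebraMap K₀ K (algebraMap (𝓞 K₀) K₀ ω) ^ 2))
    (hZ12 : Z 0 1 =
      φ₁ (z * (algebraMap K₀ K δ)⁻¹ * algebraMap K₀ K (algebraMap (𝓞 K₀) K₀ ω)) +
      φ₂ (z * (algebraMap K₀ K δ)⁻¹ * algebraMap K₀ K (algebraMap (𝓞 K₀) K₀ ω)))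
    (hZ21 : Z 1 0 = Z 0 1)
    (hZ22 : Z 1 1 =
      φ₁ (z * (algebraMap K₀ K δ)⁻¹) + φ₂ (z * (algebraMap K₀ K δ)⁻¹)) :
    (Z.map Complex.im).PosDef := by
  -- notation
  set ω₀ : K₀ := algebraMap (𝓞 K₀) K₀ ω with hω₀
  set δK : K := algebraMap K₀ K δ with hδK
  set ωK : K := algebraMap K₀ K ω₀ with hωK
  set a : K := z * δK⁻¹ with ha
  -- images of K₀ are real
  have hreal : ∀ (φ : K →+* ℂ) (x : K₀), (φ (algebraMap K₀ K x)).im = 0 :=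
    fun φ x => htotreal (φ.comp (algebraMap K₀ K)) x
  -- φₖ δK is a nonzero real
  set s₁ : ℝ := (φ₁ δK).re with hs₁
  set s₂ : ℝ := (φ₂ δK).re with hs₂
  have hδ₁ : φ₁ δK = (s₁ : ℂ) := Complex.ext rfl (by exact hreal φ₁ δ)
  have hδ₂ : φ₂ δK = (s₂ : ℂ) := Complex.ext rfl (by exact hreal φ₂ δ)
  -- φₖ ωK is real
  set r₁ : ℝ := (φ₁ ωK).re with hr₁
  set r₂ : ℝ := (φ₂ ωK).re with hr₂
  have hω₁ : φ₁ ωK = (r₁ : ℂ) := Complex.ext rfl (by exact hreal φ₁ ω₀)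
  have hω₂ : φ₂ ωK = (r₂ : ℂ) := Complex.ext rfl (by exact hreal φ₂ ω₀)
  -- tₖ := Im φₖ(a) > 0
  set t₁ : ℝ := (φ₁ a).im with ht₁
  set t₂ : ℝ := (φ₂ a).im with ht₂
  have hφa₁ : φ₁ a = φ₁ z * (s₁⁻¹ : ℝ) := by
    rw [ha, _root_.map_mul, map_inv₀, hδ₁, Complex.ofReal_inv]
  have hφa₂ : φ₂ a = φ₂ z * (s₂⁻¹ : ℝ) := by
    rw [ha, _root_.map_mul, map_inv₀, hδ₂, Complex.ofReal_inv]
  have ht₁pos : 0 < t₁ := by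
    rw [ht₁, hφa₁]
    simp only [Complex.mul_im, Complex.ofReal_re, Complex.ofReal_im, mul_zero, add_zero, zero_add]
    exact mul_pos hzsign.1 (inv_pos.mpr hδsign.1)
  have ht₂pos : 0 < t₂ := by
    rw [ht₂, hφa₂]
    simp only [Complex.mul_im, Complex.ofReal_re, Complex.ofReal_im, mul_zero, add_zero, zero_add]
    exact mul_pos_of_neg_of_neg hzsign.2 (inv_neg''.mpr hδsign.2)
  -- r₁ ≠ r₂
  have hrne : r₁ ≠ r₂ := by
    intro hre
    -- the two embeddings of K₀ agree on ω, hence on all of 𝓞 K₀, hence on δ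
    have hωeq : φ₁ ωK = φ₂ ωK := by rw [hω₁, hω₂, hre]
    set f : 𝓞 K₀ →+* ℂ :=
      (φ₁.comp (algebraMap K₀ K)).comp (algebraMap (𝓞 K₀) K₀) with hf
    set g : 𝓞 K₀ →+* ℂ :=
      (φ₂.comp (algebraMap K₀ K)).comp (algebraMap (𝓞 K₀) K₀) with hg
    have hfg : ∀ x : 𝓞 K₀, f x = g x := by
      intro x
      have hx : x ∈ Algebra.adjoin ℤ ({ω} : Set (𝓞 K₀)) := hω ▸ Algebra.mem_top
      induction hx using Algebra.adjoin_induction with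
      | mem y hy =>
        rcases hy with rfl
        simpa [hf, hg] using hωeq
      | algebraMap n => simp [hf, hg]
      | add x y _ _ hx hy => simp [hx, hy]
      | mul x y _ _ hx hy => simp [hx, hy]
    -- δ lies in 𝓞 K₀
    have hint : IsIntegral ℤ δ := by
      refine ⟨Polynomial.X ^ 2 - Polynomial.C (NumberField.discr K₀),
        Polynomial.monic_X_pow_sub_C _ two_ne_zero, ?_⟩
      rw [Polynomial.eval₂_sub, Polynomial.eval₂_X_pow, Polynomial.eval₂_C, hδ]; simp
    obtain ⟨d, hd⟩ := IsIntegralClosure.isIntegral_iff (A := 𝓞 K₀) |>.mp hint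
    have : φ₁ δK = φ₂ δK := by
      have := hfg d
      simpa [hf, hg, hd, hδK] using this
    rw [hδ₁, hδ₂] at this
    have : s₁ = s₂ := by exact_mod_cast this
    linarith [hδsign.1, hδsign.2, this ▸ hδsign.1]
  -- entry computations
  have e00 : (Z 0 0).im = t₁ * r₁ ^ 2 + t₂ * r₂ ^ 2 := by
    rw [hZ11]
    simp only [Complex.add_im, _root_.map_mul, _root_.map_pow, hω₁, hω₂,
      ← Complex.ofReal_pow]
    simp [Complex.mul_im, ht₁, ht₂, -Complex.ofReal_pow]
  have e01 : (Z 0 1).im = t₁ * r₁ + t₂ * r₂ := by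
    rw [hZ12]
    simp only [Complex.add_im, _root_.map_mul, hω₁, hω₂]
    simp [Complex.mul_im, ht₁, ht₂]
  have e11 : (Z 1 1).im = t₁ + t₂ := by
    rw [hZ22, Complex.add_im, ht₁, ht₂]
  have e10 : (Z 1 0).im = t₁ * r₁ + t₂ * r₂ := by rw [hZ21, e01]
  constructor
  · -- Hermitian (real symmetric)
    ext i j
    fin_cases i <;> fin_cases j <;>
      simp [Matrix.conjTranspose_apply, Matrix.map_apply, e01, e10]
  · intro x hx
    have hx' : x 0 ≠ 0 ∨ x 1 ≠ 0 := by
      by_contra h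
      push_neg at h
      exact hx (Finsupp.ext fun i => by fin_cases i <;> simp [h.1, h.2])
    have hdot : star x ⬝ᵥ (Z.map Complex.im) *ᵥ x =
        t₁ * (r₁ * x 0 + x 1) ^ 2 + t₂ * (r₂ * x 0 + x 1) ^ 2 := by
      simp only [dotProduct, Matrix.mulVec, Fin.sum_univ_two, Matrix.map_apply,
        Pi.star_apply, star_trivial, e00, e01, e10, e11]
      ring
    have hgoal : (x.sum fun i xi ↦ x.sum fun j xj ↦ star xi * (Z.map Complex.im) i j * xj) =
        star ⇑x ⬝ᵥ (Z.map Complex.im) *ᵥ ⇑x := by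
      simp only [Finsupp.sum_fintype, dotProduct, mulVec, Fin.sum_univ_two,
        Pi.star_apply, star_trivial, star_zero, zero_mul, mul_zero, add_zero,
        Finset.sum_const_zero, implies_true]
      ring
    rw [hgoal, hdot]
    have key : r₁ * x 0 + x 1 ≠ 0 ∨ r₂ * x 0 + x 1 ≠ 0 := by
      by_contra h
      push_neg at h
      have hx0 : x 0 = 0 := by
        have : (r₁ - r₂) * x 0 = 0 := by linarith [h.1, h.2]
        rcases mul_eq_zero.mp this with h' | h'
        · exact absurd (by linarith : r₁ = r₂) hrne
        · exact h'
      have hx1 : x 1 = 0 := by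
        have := h.1; rw [hx0] at this; linarith
      rcases hx' with h' | h' <;> [exact h' hx0; exact h' hx1]
    rcases key with h | h
    · have h1 : 0 < (r₁ * x 0 + x 1) ^ 2 := by positivity
      exact add_pos_of_pos_of_nonneg (mul_pos ht₁pos h1)
        (mul_nonneg ht₂pos.le (sq_nonneg _))
    · have h1 : 0 < (r₂ * x 0 + x 1) ^ 2 := by positivity
      exact add_pos_of_nonneg_of_pos (mul_nonneg ht₁pos.le (sq_nonneg _))
        (mul_pos ht₂pos h1)
end
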